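/- arXiv:1106.1337 — 6 statements merged into one kernel-verified Lean document; each statement's English description precedes it below -/
import Mathlib

section
/- Let F be a field, let n ≥ 1 and 0 ≤ k ≤ n, and fix a, b ∈ F. Let h be a polynomial in n variables t_1, …, t_n over F that is symmetric in the first k variables and symmetric in the last n − k variables, and whose total degree is strictly less than n. Suppose that (whenever k ≥ 1) substituting t_1 := a into h yields the zero polynomial, and that (whenever k ≤ n − 1) substituting t_n := b into h yields the zero polynomial. Then h is the zero polynomial. (Equivalently: a polynomial f of total degree < n with these symmetries is uniquely determined by its two evaluations f(a, t_2, …, t_n) and f(t_1, …, t_{n−1}, b).) -/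
open MvPolynomial

section Aux

variable {F : Type*} [Field F] {σ : Type*} [DecidableEq σ]

/-- If substituting `C c` for `X i` kills `p`, then `X i - C c` divides `p`. -/
lemma aux_dvd_of_subst_eq_zero (i : σ) (c : F) (p : MvPolynomial σ F)
    (hp : aeval (fun j => if j = i then C c else X j) p = 0) :
    (X i - C c) ∣ p := by
  set I : Ideal (MvPolynomial σ F) := Ideal.span {X i - C c} with hI
  have key : (Ideal.Quotient.mkₐ F I).comp
      (aeval (fun j => if j = i then C c else X j)) = Ideal.Quotient.mkₐ F I := by
    apply MvPolynomial.algHom_ext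
    intro j
    simp only [AlgHom.comp_apply, aeval_X, Ideal.Quotient.mkₐ_eq_mk]
    by_cases hji : j = i
    · subst hji
      simp only [if_pos rfl]
      refine (Ideal.Quotient.mk_eq_mk_iff_sub_mem _ _).mpr ?_
      have : X j - C c ∈ I := Ideal.subset_span rfl
      simpa using I.neg_mem this
    · simp [hji]
  have := congrArg (fun φ : MvPolynomial σ F →ₐ[F] _ => φ p) key
  simp only [AlgHom.comp_apply, hp, map_zero, Ideal.Quotient.mkₐ_eq_mk] at this
  have hmem : p ∈ I := Ideal.Quotient.eq_zero_iff_mem.mp this.symm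
  exact (Ideal.mem_span_singleton).mp hmem

omit [DecidableEq σ] in
lemma aux_totalDegree_linear_mul (j : σ) (c : F) (g : MvPolynomial σ F) (hg : g ≠ 0) :
    ((X j - C c) * g).totalDegree = g.totalDegree + 1 := by
  have h1 : (X j * g).totalDegree = g.totalDegree + 1 := by
    apply le_antisymm
    · calc (X j * g).totalDegree ≤ (X j : MvPolynomial σ F).totalDegree + g.totalDegree :=
            totalDegree_mul _ _
        _ = g.totalDegree + 1 := by rw [totalDegree_X]; ring
    · obtain ⟨d, hd, hdeg⟩ := Finset.exists_mem_eq_sup g.support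
        (MvPolynomial.support_nonempty.mpr hg) (fun s => s.sum fun _ e => e)
      have hco : coeff (Finsupp.single j 1 + d) (X j * g) = coeff d g := coeff_X_mul d j g
      have hmem : Finsupp.single j 1 + d ∈ (X j * g).support := by
        rw [mem_support_iff, hco]
        exact mem_support_iff.mp hd
      have hle := le_totalDegree hmem
      have hsum : (Finsupp.single j 1 + d).sum (fun _ e => e)
          = 1 + d.sum (fun _ e => e) := by
        rw [Finsupp.sum_add_index' (fun _ => rfl) (fun _ _ _ => rfl)]
        rw [Finsupp.sum_single_index rfl]
      rw [hsum] at hle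
      rw [MvPolynomial.totalDegree, hdeg]
      omega
  have h2 : (C c * g).totalDegree < (X j * g).totalDegree := by
    have : (C c * g).totalDegree ≤ g.totalDegree := by
      calc (C c * g).totalDegree ≤ (C c : MvPolynomial σ F).totalDegree + g.totalDegree :=
            totalDegree_mul _ _
        _ = g.totalDegree := by rw [totalDegree_C]; ring
    omega
  have : (X j - C c) * g = X j * g + -(C c * g) := by ring
  rw [this, totalDegree_add_eq_left_of_totalDegree_lt (by rwa [totalDegree_neg]), h1]

lemma aux_linear_ne_zero (j : σ) (c : F) : (X j - C c : MvPolynomial σ F) ≠ 0 := by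
  intro h0
  have := congrArg (coeff (Finsupp.single j 1)) h0
  simp only [coeff_sub, coeff_zero] at this
  rw [MvPolynomial.coeff_X_same, MvPolynomial.coeff_C,
    if_neg (fun e => (one_ne_zero (α := ℕ)) (Finsupp.single_eq_zero.mp e.symm))] at this
  simp at this

lemma aux_card_le_totalDegree (c : σ → F) (s : Finset σ)
    (h : MvPolynomial σ F) (hh : h ≠ 0)
    (hv : ∀ i ∈ s, aeval (fun j => if j = i then C (c i) else X j) h = 0) :
    s.card ≤ h.totalDegree := by
  induction s using Finset.induction generalizing h with
  | empty => simp
  | @insert j s hj ih =>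
    obtain ⟨g, hg⟩ := aux_dvd_of_subst_eq_zero j (c j) h (hv j (Finset.mem_insert_self _ _))
    have hg0 : g ≠ 0 := by rintro rfl; rw [mul_zero] at hg; exact hh hg
    have hvg : ∀ i ∈ s, aeval (fun l => if l = i then C (c i) else X l) g = 0 := by
      intro i hi
      have hij : j ≠ i := fun e => hj (e ▸ hi)
      have hv' := hv i (Finset.mem_insert_of_mem hi)
      rw [hg, map_mul] at hv'
      have hfac : aeval (fun l => if l = i then C (c i) else X l) (X j - C (c j))
          = X j - C (c j) := by simp [hij]
      rw [hfac] at hv'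
      exact (mul_eq_zero.mp hv').resolve_left (aux_linear_ne_zero j (c j))
    have hle := ih g hg0 hvg
    rw [hg, aux_totalDegree_linear_mul _ _ _ hg0, Finset.card_insert_of_notMem hj]
    omega

end Aux

/-- A polynomial in `n` variables over a field `F`, symmetric in the first `k` variables
and in the last `n - k` variables, of total degree `< n`, which vanishes upon the
substitution `t₁ := a` (when `k ≥ 1`) and upon the substitution `tₙ := b`
(when `k ≤ n - 1`), must be the zero polynomial. -/
theorem stmt_0 (F : Type*) [Field F] (n k : ℕ) (hn : 1 ≤ n) (hk : k ≤ n) (a b : F)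
    (h : MvPolynomial (Fin n) F)
    (hsym₁ : ∀ σ : Equiv.Perm (Fin n), (∀ i : Fin n, k ≤ (i : ℕ) → σ i = i) →
      MvPolynomial.rename σ h = h)
    (hsym₂ : ∀ σ : Equiv.Perm (Fin n), (∀ i : Fin n, (i : ℕ) < k → σ i = i) →
      MvPolynomial.rename σ h = h)
    (hdeg : h.totalDegree < n)
    (ha : 1 ≤ k → MvPolynomial.aeval
      (fun i : Fin n => if i = (⟨0, hn⟩ : Fin n) then MvPolynomial.C a else MvPolynomial.X i)
      h = 0)
    (hb : k ≤ n - 1 → MvPolynomial.aeval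
      (fun i : Fin n => if i = (⟨n - 1, Nat.sub_lt hn Nat.one_pos⟩ : Fin n)
        then MvPolynomial.C b else MvPolynomial.X i) h = 0) :
    h = 0 := by
  by_contra hh
  classical
  set i0 : Fin n := ⟨0, hn⟩ with hi0
  set i1 : Fin n := ⟨n - 1, Nat.sub_lt hn Nat.one_pos⟩ with hi1
  set c : Fin n → F := fun i => if (i : ℕ) < k then a else b with hc
  have key : ∀ (i p : Fin n) (d : F) (σ : Equiv.Perm (Fin n)), σ = Equiv.swap p i →
      rename (σ : Fin n → Fin n) h = h →
      aeval (fun j : Fin n => if j = p then C d else X j) h = 0 →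
      aeval (fun j : Fin n => if j = i then C d else X j) h = 0 := by
    intro i p d σ hσdef hren h0
    have step1 : aeval (fun j : Fin n => if j = i then C d else X j) h
        = aeval ((fun j : Fin n => if j = i then C d else X j) ∘ σ) h := by
      conv_lhs => rw [← hren]
      exact aeval_rename _ _ _
    have step2 : ((fun j : Fin n => if j = i then C d else X j) ∘ σ)
        = fun j => (rename (σ : Fin n → Fin n) : MvPolynomial (Fin n) F →ₐ[F] _)
            ((fun l : Fin n => if l = p then C d else X l) j) := by
      funext j
      by_cases hjp : j = p
      · subst hjp
        simp [Function.comp, hσdef, Equiv.swap_apply_left]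
      · have hσj : σ j ≠ i := by
          intro e
          apply hjp
          have : j = σ.symm i := by rw [← e]; simp
          rw [hσdef] at this
          simpa [Equiv.symm_swap, Equiv.swap_apply_right] using this
        simp [Function.comp, hσj, hjp]
    rw [step1, step2, ← MvPolynomial.comp_aeval, AlgHom.comp_apply, h0, map_zero]
  have hv : ∀ i : Fin n, aeval (fun j => if j = i then C (c i) else X j) h = 0 := by
    intro i
    by_cases hik : (i : ℕ) < k
    · have hci : c i = a := by simp [hc, hik]
      rw [hci]
      refine key i i0 a (Equiv.swap i0 i) rfl ?_ (ha (by omega))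
      refine hsym₁ _ (fun l hl => Equiv.swap_apply_of_ne_of_ne ?_ ?_)
      · exact Fin.ne_of_val_ne (by simp [hi0]; omega)
      · exact Fin.ne_of_val_ne (by omega)
    · have hci : c i = b := by simp [hc, hik]
      have hik' : k ≤ (i : ℕ) := le_of_not_gt hik
      have hkn : k ≤ n - 1 := by have := i.isLt; omega
      rw [hci]
      refine key i i1 b (Equiv.swap i1 i) rfl ?_ (hb hkn)
      refine hsym₂ _ (fun l hl => Equiv.swap_apply_of_ne_of_ne ?_ ?_)
      · refine Fin.ne_of_val_ne ?_
        simp only [hi1]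
        omega
      · exact Fin.ne_of_val_ne (by omega)
  have hcard := aux_card_le_totalDegree c Finset.univ h hh (fun i _ => hv i)
  rw [Finset.card_univ, Fintype.card_fin] at hcard
  omega
end

section
/- Let F be a field, let n ≥ 1 and 0 ≤ k ≤ n, and fix a, b ∈ F. Let h be a polynomial in n variables t_1, …, t_n over F that is symmetric in the first k variables and symmetric in the last n − k variables, and whose total degree is at most n. Suppose that (whenever k ≥ 1) substituting t_1 := a into h yields the zero polynomial, and that (whenever k ≤ n − 1) substituting t_n := b into h yields the zero polynomial. Then there exists a constant λ ∈ F such that h = λ · ∏_{i=1}^{k} (t_i − a) · ∏_{i=k+1}^{n} (t_i − b). (Equivalently: a polynomial of total degree equal to n with these symmetries is determined by the two evaluations at t_1 = a and t_n = b up to adding a constant multiple of this product.) -/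
open MvPolynomial

theorem aux_prod_primes_dvd {α ι : Type*} [CommMonoidWithZero α] [DecidableEq ι]
    (s : Finset ι) (p : ι → α) (hp : ∀ i ∈ s, Prime (p i))
    (hne : ∀ i ∈ s, ∀ j ∈ s, i ≠ j → ¬ p i ∣ p j) :
    ∀ n : α, (∀ i ∈ s, p i ∣ n) → (∏ i ∈ s, p i) ∣ n := by
  induction s using Finset.induction_on with
  | empty => simp
  | @insert a s ha ih =>
    intro n hd
    obtain ⟨m, rfl⟩ := hd a (Finset.mem_insert_self a s)
    rw [Finset.prod_insert ha]
    refine mul_dvd_mul_left _ (ih (fun i hi => hp i (Finset.mem_insert_of_mem hi))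
      (fun i hi j hj hij => hne i (Finset.mem_insert_of_mem hi) j (Finset.mem_insert_of_mem hj) hij)
      m (fun i hi => ?_))
    have hia : i ≠ a := fun hEq => ha (hEq ▸ hi)
    have hpi := hp i (Finset.mem_insert_of_mem hi)
    rcases hpi.dvd_or_dvd (hd i (Finset.mem_insert_of_mem hi)) with hpa | hm
    · exact absurd hpa (hne i (Finset.mem_insert_of_mem hi) a (Finset.mem_insert_self a s) hia)
    · exact hm

theorem aux_dvd_sub_aeval {R : Type*} [CommRing R] {σ : Type*} [DecidableEq σ]
    (i : σ) (c : R) (p : MvPolynomial σ R) :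
    (X i - C c) ∣ (p - aeval (fun j => if j = i then C c else X j) p) := by
  induction p using MvPolynomial.induction_on with
  | C r => simp
  | add p q hp hq =>
    have : p + q - aeval (fun j => if j = i then C c else X j) (p + q)
        = (p - aeval (fun j => if j = i then C c else X j) p)
          + (q - aeval (fun j => if j = i then C c else X j) q) := by
      rw [map_add]; ring
    rw [this]; exact dvd_add hp hq
  | mul_X p j hp =>
    rw [map_mul, aeval_X]
    by_cases hj : j = i
    · subst hj
      rw [if_pos rfl]
      have : p * X j - aeval (fun j' => if j' = j then C c else X j') p * C c
          = (p - aeval (fun j' => if j' = j then C c else X j') p) * X j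
            + aeval (fun j' => if j' = j then C c else X j') p * (X j - C c) := by ring
      rw [this]
      exact dvd_add (hp.mul_right _) (dvd_mul_left _ _)
    · rw [if_neg hj]
      have : p * X j - aeval (fun j' => if j' = i then C c else X j') p * X j
          = (p - aeval (fun j' => if j' = i then C c else X j') p) * X j := by ring
      rw [this]
      exact hp.mul_right _

theorem aux_dvd_of_aeval_eq_zero {R : Type*} [CommRing R] {σ : Type*} [DecidableEq σ]
    (i : σ) (c : R) (p : MvPolynomial σ R)
    (hz : aeval (fun j => if j = i then C c else X j) p = 0) :
    (X i - C c) ∣ p := by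
  have := aux_dvd_sub_aeval i c p
  rwa [hz, sub_zero] at this

theorem aux_prime_X_sub_C {F : Type*} [Field F] {m : ℕ} (i : Fin (m+1)) (c : F) :
    Prime (X i - C c : MvPolynomial (Fin (m+1)) F) := by
  let e := (renameEquiv F (finSuccEquiv' i)).trans (optionEquivLeft F (Fin m))
  rw [← MulEquiv.prime_iff e.toMulEquiv]
  have he : e (X i - C c) = Polynomial.X - Polynomial.C (C c) := by
    rw [map_sub]
    have h1 : e (X i) = Polynomial.X := by
      simp [e, renameEquiv_apply, rename_X, finSuccEquiv'_at, optionEquivLeft_X_none]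
    have h2 : e (C c) = Polynomial.C (C c) := by
      simp [e, renameEquiv_apply, rename_C, optionEquivLeft_C]
    rw [h1, h2]
  show Prime (e.toMulEquiv (X i - C c))
  rw [show (e.toMulEquiv (X i - C c) : Polynomial (MvPolynomial (Fin m) F)) = e (X i - C c) from rfl, he]
  exact Polynomial.prime_X_sub_C (C c)

noncomputable def chiAux (F : Type*) [CommRing F] (σ : Type*) :
    MvPolynomial σ F →ₐ[F] Polynomial (MvPolynomial σ F) :=
  aeval fun i => Polynomial.C (X i) * Polynomial.X

theorem chiAux_monomial {F : Type*} [CommRing F] {σ : Type*} (m : σ →₀ ℕ) (c : F) :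
    chiAux F σ (monomial m c)
      = Polynomial.C (monomial m c) * Polynomial.X ^ (m.sum fun _ e => e) := by
  classical
  rw [chiAux, aeval_monomial, monomial_eq, Finsupp.prod, Finsupp.prod, Finsupp.sum]
  simp only [mul_pow]
  rw [Finset.prod_mul_distrib, Finset.prod_pow_eq_pow_sum]
  have h1 : (∏ i ∈ m.support, Polynomial.C (X i : MvPolynomial σ F) ^ m i)
      = Polynomial.C (∏ i ∈ m.support, (X i : MvPolynomial σ F) ^ m i) := by
    rw [map_prod]
    simp [map_pow]
  rw [h1]
  have h2 : (algebraMap F (Polynomial (MvPolynomial σ F))) c = Polynomial.C (C c) := by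
    rw [Polynomial.algebraMap_apply]
    rfl
  rw [h2, map_mul]
  ring

theorem chiAux_spec {F : Type*} [Field F] {σ : Type*} {p : MvPolynomial σ F} (hp : p ≠ 0) :
    chiAux F σ p ≠ 0 ∧ (chiAux F σ p).natDegree = p.totalDegree := by
  classical
  set D := p.totalDegree with hD
  have hsum : chiAux F σ p = ∑ m ∈ p.support,
      Polynomial.C (monomial m (coeff m p)) * Polynomial.X ^ (m.sum fun _ e => e) := by
    conv_lhs => rw [p.as_sum, map_sum]
    exact Finset.sum_congr rfl fun m _ => chiAux_monomial m (coeff m p)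
  have hcoeff : ∀ e, (chiAux F σ p).coeff e
      = ∑ m ∈ p.support, if (m.sum fun _ e => e) = e then monomial m (coeff m p) else 0 := by
    intro e
    rw [hsum, Polynomial.finset_sum_coeff]
    refine Finset.sum_congr rfl fun m _ => ?_
    rw [Polynomial.coeff_C_mul, Polynomial.coeff_X_pow]
    by_cases hme : (m.sum fun _ e => e) = e
    · rw [if_pos hme, if_pos hme.symm, mul_one]
    · rw [if_neg hme, if_neg (Ne.symm hme), mul_zero]
  have hsupp : p.support.Nonempty := support_nonempty.mpr hp
  obtain ⟨m₀, hm₀, hm₀d⟩ : ∃ m ∈ p.support, (m.sum fun _ e => e) = D := by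
    obtain ⟨m₀, hm₀, hval⟩ := Finset.exists_mem_eq_sup p.support hsupp fun m => m.sum fun _ e => e
    exact ⟨m₀, hm₀, hval.symm⟩
  have key : (chiAux F σ p).coeff D ≠ 0 := by
    rw [hcoeff]
    intro h0
    have h1 := congrArg (MvPolynomial.coeff m₀) h0
    rw [MvPolynomial.coeff_sum] at h1
    rw [Finset.sum_eq_single m₀ ?_ ?_] at h1
    · rw [if_pos hm₀d, coeff_monomial, if_pos rfl] at h1
      exact mem_support_iff.mp hm₀ (by simpa using h1)
    · intro m hm hmm
      by_cases hme : (m.sum fun _ e => e) = D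
      · rw [if_pos hme, coeff_monomial, if_neg hmm]
      · rw [if_neg hme, coeff_zero]
    · intro hm; exact absurd hm₀ hm
  refine ⟨fun h0 => key (by rw [h0, Polynomial.coeff_zero]), le_antisymm ?_ ?_⟩
  · rw [Polynomial.natDegree_le_iff_coeff_eq_zero]
    intro N hN
    rw [hcoeff]
    refine Finset.sum_eq_zero fun m hm => ?_
    rw [if_neg]
    intro hme
    exact absurd (le_totalDegree hm) (by omega)
  · exact Polynomial.le_natDegree_of_ne_zero key

theorem totalDegree_mul_eq {F : Type*} [Field F] {σ : Type*} {p q : MvPolynomial σ F}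
    (hp : p ≠ 0) (hq : q ≠ 0) :
    (p * q).totalDegree = p.totalDegree + q.totalDegree := by
  obtain ⟨h1, h2⟩ := chiAux_spec hp
  obtain ⟨h3, h4⟩ := chiAux_spec hq
  obtain ⟨_, h6⟩ := chiAux_spec (mul_ne_zero hp hq)
  rw [← h6, map_mul, Polynomial.natDegree_mul h1 h3, h2, h4]

theorem aux_X_sub_C_ne_zero {F : Type*} [Field F] {σ : Type*} (i : σ) (d : F) :
    (X i - C d : MvPolynomial σ F) ≠ 0 := by
  classical
  intro h0
  have := congrArg (coeff (Finsupp.single i 1)) h0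
  rw [coeff_sub, coeff_zero, coeff_X, coeff_C,
    if_neg (by simp [Finsupp.single_eq_zero, eq_comm] : ¬ (0 : σ →₀ ℕ) = Finsupp.single i 1)] at this
  simp at this

theorem aux_totalDegree_X_sub_C {F : Type*} [Field F] {σ : Type*} (i : σ) (d : F) :
    (X i - C d : MvPolynomial σ F).totalDegree = 1 := by
  classical
  refine le_antisymm ?_ ?_
  · rw [sub_eq_add_neg, ← C_neg]
    refine (totalDegree_add _ _).trans ?_
    simp [totalDegree_X, totalDegree_C]
  · have hmem : Finsupp.single i 1 ∈ (X i - C d : MvPolynomial σ F).support := by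
      rw [mem_support_iff, coeff_sub, coeff_X, coeff_C,
        if_neg (by simp [eq_comm] : ¬ (0 : σ →₀ ℕ) = Finsupp.single i 1)]
      simp
    have := le_totalDegree hmem
    simpa using this

theorem aux_prod_linear {F : Type*} [Field F] {n : ℕ} (c : Fin n → F) (s : Finset (Fin n)) :
    ((∏ i ∈ s, (X i - C (c i)) : MvPolynomial (Fin n) F) ≠ 0)
    ∧ (∏ i ∈ s, (X i - C (c i)) : MvPolynomial (Fin n) F).totalDegree = s.card := by
  classical
  induction s using Finset.induction_on with
  | empty => simp
  | @insert a s ha ih =>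
    obtain ⟨ih1, ih2⟩ := ih
    rw [Finset.prod_insert ha]
    constructor
    · exact mul_ne_zero (aux_X_sub_C_ne_zero a (c a)) ih1
    · rw [totalDegree_mul_eq (aux_X_sub_C_ne_zero a (c a)) ih1, aux_totalDegree_X_sub_C, ih2,
        Finset.card_insert_of_notMem ha]
      omega
/-- A polynomial in `n` variables over a field `F`, symmetric in the first `k` variables
and in the last `n - k` variables, of total degree `≤ n`, which vanishes upon the
substitution `t₁ := a` (when `k ≥ 1`) and upon the substitution `tₙ := b`
(when `k ≤ n - 1`), is a constant multiple of `∏_{i<k} (tᵢ - a) · ∏_{i≥k} (tᵢ - b)`. -/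
theorem stmt_1 (F : Type*) [Field F] (n k : ℕ) (hn : 1 ≤ n) (hk : k ≤ n) (a b : F)
    (h : MvPolynomial (Fin n) F)
    (hsym₁ : ∀ σ : Equiv.Perm (Fin n), (∀ i : Fin n, k ≤ (i : ℕ) → σ i = i) →
      MvPolynomial.rename σ h = h)
    (hsym₂ : ∀ σ : Equiv.Perm (Fin n), (∀ i : Fin n, (i : ℕ) < k → σ i = i) →
      MvPolynomial.rename σ h = h)
    (hdeg : h.totalDegree ≤ n)
    (ha : 1 ≤ k → MvPolynomial.aeval
      (fun i : Fin n => if i = (⟨0, hn⟩ : Fin n) then MvPolynomial.C a else MvPolynomial.X i)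
      h = 0)
    (hb : k ≤ n - 1 → MvPolynomial.aeval
      (fun i : Fin n => if i = (⟨n - 1, Nat.sub_lt hn Nat.one_pos⟩ : Fin n)
        then MvPolynomial.C b else MvPolynomial.X i) h = 0) :
    ∃ lam : F, h = MvPolynomial.C lam *
      ∏ i : Fin n, (if (i : ℕ) < k then MvPolynomial.X i - MvPolynomial.C a
        else MvPolynomial.X i - MvPolynomial.C b) := by
  classical
  by_cases h0 : h = 0
  · exact ⟨0, by simp [h0]⟩
  obtain ⟨m, rfl⟩ : ∃ m, n = m + 1 := ⟨n - 1, by omega⟩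
  set cc : Fin (m+1) → F := fun i => if (i : ℕ) < k then a else b with hcc
  set L : Fin (m+1) → MvPolynomial (Fin (m+1)) F := fun i => X i - C (cc i) with hL
  have hvan : ∀ i : Fin (m+1), aeval (fun j => if j = i then C (cc i) else X j) h = 0 := by
    intro i
    by_cases hik : (i : ℕ) < k
    · have hk1 : 1 ≤ k := by omega
      set z : Fin (m+1) := ⟨0, hn⟩ with hz
      set σ : Equiv.Perm (Fin (m+1)) := Equiv.swap z i with hσ
      have hfix : ∀ j : Fin (m+1), k ≤ (j : ℕ) → σ j = j := by
        intro j hj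
        refine Equiv.swap_apply_of_ne_of_ne ?_ ?_
        · intro hEq
          rw [hEq] at hj
          simp only [hz] at hj
          omega
        · intro hEq
          rw [hEq] at hj
          omega
      have hh := hsym₁ σ hfix
      have hfun : ((fun j => if j = i then C (cc i) else X j) ∘ σ)
          = fun j : Fin (m+1) => rename σ (if j = z then C a else X j) := by
        funext j
        by_cases hjz : j = z
        · subst hjz
          simp [Function.comp, hσ, Equiv.swap_apply_left, hcc, hik]
        · have hσj : σ j ≠ i := by
            intro hEq
            exact hjz (σ.injective (hEq.trans (Equiv.swap_apply_left z i).symm))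
          simp [Function.comp, if_neg hσj, if_neg hjz, rename_X]
      calc aeval (fun j => if j = i then C (cc i) else X j) h
          = aeval (fun j => if j = i then C (cc i) else X j) (rename σ h) := by rw [hh]
        _ = aeval ((fun j => if j = i then C (cc i) else X j) ∘ σ) h := aeval_rename _ _ _
        _ = aeval (fun j : Fin (m+1) => rename σ (if j = z then C a else X j)) h := by
              rw [hfun]
        _ = rename σ (aeval (fun j : Fin (m+1) => if j = z then C a else X j) h) := by
              rw [comp_aeval_apply]
        _ = 0 := by rw [ha hk1, map_zero]
    · have hki : k ≤ (i : ℕ) := by omega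
      have him : (i : ℕ) ≤ m := by omega
      have hkm : k ≤ m + 1 - 1 := by omega
      set z : Fin (m+1) := ⟨m + 1 - 1, Nat.sub_lt hn Nat.one_pos⟩ with hz
      have hzval : (z : ℕ) = m := by simp [hz]
      set σ : Equiv.Perm (Fin (m+1)) := Equiv.swap z i with hσ
      have hfix : ∀ j : Fin (m+1), (j : ℕ) < k → σ j = j := by
        intro j hj
        refine Equiv.swap_apply_of_ne_of_ne ?_ ?_
        · intro hEq
          rw [hEq] at hj
          omega
        · intro hEq
          rw [hEq] at hj
          omega
      have hh := hsym₂ σ hfix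
      have hfun : ((fun j => if j = i then C (cc i) else X j) ∘ σ)
          = fun j : Fin (m+1) => rename σ (if j = z then C b else X j) := by
        funext j
        by_cases hjz : j = z
        · subst hjz
          simp [Function.comp, hσ, Equiv.swap_apply_left, hcc, hik]
        · have hσj : σ j ≠ i := by
            intro hEq
            exact hjz (σ.injective (hEq.trans (Equiv.swap_apply_left z i).symm))
          simp [Function.comp, if_neg hσj, if_neg hjz, rename_X]
      calc aeval (fun j => if j = i then C (cc i) else X j) h
          = aeval (fun j => if j = i then C (cc i) else X j) (rename σ h) := by rw [hh]
        _ = aeval ((fun j => if j = i then C (cc i) else X j) ∘ σ) h := aeval_rename _ _ _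
        _ = aeval (fun j : Fin (m+1) => rename σ (if j = z then C b else X j)) h := by
              rw [hfun]
        _ = rename σ (aeval (fun j : Fin (m+1) => if j = z then C b else X j) h) := by
              rw [comp_aeval_apply]
        _ = 0 := by rw [hb hkm, map_zero]
  have hdvd : ∀ i : Fin (m+1), L i ∣ h := fun i =>
    aux_dvd_of_aeval_eq_zero i (cc i) h (hvan i)
  have hprime : ∀ i : Fin (m+1), Prime (L i) := fun i => aux_prime_X_sub_C i (cc i)
  have hnd : ∀ i ∈ Finset.univ, ∀ j ∈ (Finset.univ : Finset (Fin (m+1))), i ≠ j → ¬ L i ∣ L j := by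
    intro i _ j _ hij hdv
    obtain ⟨q, hq⟩ := hdv
    have h1 := congrArg (aeval (fun t => if t = i then C (cc i) else X t)) hq
    rw [map_mul] at h1
    have h2 : aeval (fun t => if t = i then C (cc i) else X t) (L i) = 0 := by
      simp [hL]
    have h3 : aeval (fun t => if t = i then C (cc i) else X t) (L j) = X j - C (cc j) := by
      simp [hL, if_neg (Ne.symm hij)]
    rw [h3, h2, zero_mul] at h1
    exact aux_X_sub_C_ne_zero j (cc j) h1
  have hPdvd : (∏ i : Fin (m+1), L i) ∣ h :=
    aux_prod_primes_dvd Finset.univ L (fun i _ => hprime i) hnd h (fun i _ => hdvd i)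
  obtain ⟨g, hg⟩ := hPdvd
  have hP := aux_prod_linear cc Finset.univ
  have hgne : g ≠ 0 := by
    rintro rfl; rw [mul_zero] at hg; exact h0 hg
  have hdeg2 : g.totalDegree = 0 := by
    have hde := hdeg
    rw [hg, totalDegree_mul_eq hP.1 hgne, hP.2] at hde
    simp only [Finset.card_univ, Fintype.card_fin] at hde
    omega
  have hgC : g = C (g.coeff 0) := by
    rw [totalDegree_eq_zero_iff] at hdeg2
    ext mo
    rcases eq_or_ne mo 0 with rfl | hm
    · simp
    · rw [coeff_C, if_neg (Ne.symm hm)]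
      by_contra hcne
      obtain ⟨x, hx⟩ := Finsupp.ne_iff.mp hm
      exact hx (by simpa using hdeg2 mo (mem_support_iff.mpr hcne) x)
  refine ⟨g.coeff 0, ?_⟩
  have hprodeq : (∏ i : Fin (m+1), (if (i : ℕ) < k then X i - C a else X i - C b))
      = ∏ i : Fin (m+1), L i := by
    refine Finset.prod_congr rfl fun i _ => ?_
    by_cases hik : (i : ℕ) < k <;> simp [hL, hcc, hik]
  rw [hprodeq, hg, mul_comm (∏ i : Fin (m+1), L i) g]
  conv_lhs => rw [hgC]
end

section
/- Let F be a field, let n ≥ 1 and 0 ≤ k ≤ n, and fix a, b ∈ F. Let h be a polynomial in n variables t_1, …, t_n over F that is symmetric in the first k variables and symmetric in the last n − k variables. Suppose that (whenever k ≥ 1) substituting t_1 := a into h yields the zero polynomial, and that (whenever k ≤ n − 1) substituting t_n := b into h yields the zero polynomial. Then the product ∏_{i=1}^{k} (t_i − a) · ∏_{i=k+1}^{n} (t_i − b) divides h in F[t_1, …, t_n]. -/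
open MvPolynomial

section Aux
variable {F : Type*} [Field F] {n : ℕ}

noncomputable def myEquiv (i : Fin n) :
    MvPolynomial (Fin n) F ≃ₐ[F] Polynomial (MvPolynomial {j : Fin n // j ≠ i} F) :=
  (renameEquiv F (Equiv.optionSubtypeNe i)).symm.trans (optionEquivLeft F {j : Fin n // j ≠ i})

lemma myEquiv_X_self (i : Fin n) : myEquiv (F := F) i (X i) = Polynomial.X := by
  simp [myEquiv, renameEquiv, Equiv.optionSubtypeNe_symm_self]

lemma myEquiv_X_of_ne {i j : Fin n} (hij : j ≠ i) :
    myEquiv (F := F) i (X j) = Polynomial.C (X ⟨j, hij⟩) := by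
  simp [myEquiv, renameEquiv, Equiv.optionSubtypeNe_symm_of_ne hij]

lemma myEquiv_C (i : Fin n) (c : F) : myEquiv (F := F) i (C c) = Polynomial.C (C c) := by
  simp [myEquiv]

lemma myEquiv_X_sub_C (i : Fin n) (c : F) :
    myEquiv (F := F) i (X i - C c) = Polynomial.X - Polynomial.C (C c) := by
  rw [map_sub, myEquiv_X_self, myEquiv_C]

lemma prime_X_sub_C' (i : Fin n) (c : F) : Prime (X i - C c : MvPolynomial (Fin n) F) := by
  rw [← MulEquiv.prime_iff (myEquiv (F := F) i).toMulEquiv]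
  simpa [myEquiv_X_sub_C] using Polynomial.prime_X_sub_C (C c : MvPolynomial {j : Fin n // j ≠ i} F)

lemma dvd_of_aeval_eq_zero (i : Fin n) (c : F) (h : MvPolynomial (Fin n) F)
    (hz : aeval (fun j : Fin n => if j = i then C c else X j) h = 0) :
    (X i - C c) ∣ h := by
  -- relate the substitution to polynomial evaluation
  have key : (rename (Subtype.val : {j : Fin n // j ≠ i} → Fin n)).toRingHom.comp
      ((Polynomial.evalRingHom (C c : MvPolynomial {j : Fin n // j ≠ i} F)).comp
        (myEquiv (F := F) i).toAlgHom.toRingHom)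
      = (aeval (fun j : Fin n => if j = i then C c else X j)).toRingHom := by
    apply MvPolynomial.ringHom_ext
    · intro r
      simp [myEquiv_C]
    · intro j
      by_cases hj : j = i
      · subst hj
        simp [myEquiv_X_self]
      · simp [myEquiv_X_of_ne hj, hj]
  have h1 : rename (Subtype.val : {j : Fin n // j ≠ i} → Fin n)
      (Polynomial.eval (C c) (myEquiv (F := F) i h)) = 0 := by
    have := congrArg (fun φ => φ h) key
    simpa using this.trans hz
  have h2 : Polynomial.eval (C c) (myEquiv (F := F) i h) = 0 := by
    have hinj := rename_injective (R := F) (Subtype.val : {j : Fin n // j ≠ i} → Fin n)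
      Subtype.val_injective
    exact hinj (by simpa using h1)
  have h3 : (Polynomial.X - Polynomial.C (C c : MvPolynomial {j : Fin n // j ≠ i} F)) ∣
      myEquiv (F := F) i h := (Polynomial.dvd_iff_isRoot).2 h2
  have h4 := map_dvd (myEquiv (F := F) i).symm h3
  rw [← myEquiv_X_sub_C i c] at h4
  simpa using h4

lemma not_dvd_of_ne {i j : Fin n} (hij : i ≠ j) (c d : F) :
    ¬ (X i - C c : MvPolynomial (Fin n) F) ∣ (X j - C d) := by
  intro hdvd
  have := map_dvd (aeval (R := F) (fun j : Fin n => if j = i then C c else X j)) hdvd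
  simp [hij.symm] at this
  exact (prime_X_sub_C' j d).ne_zero this

lemma transfer (σ : Equiv.Perm (Fin n)) (h : MvPolynomial (Fin n) F)
    (hren : rename σ h = h) (i : Fin n) (c : F)
    (hz : aeval (fun j : Fin n => if j = i then C c else X j) h = 0) :
    aeval (fun j : Fin n => if j = σ i then C c else X j) h = 0 := by
  have e1 : (fun j : Fin n => if j = σ i then (C c : MvPolynomial (Fin n) F) else X j) ∘ σ
      = fun j => rename σ (if j = i then C c else X j) := by
    funext j
    by_cases hj : j = i
    · subst hj; simp
    · have hσ : σ j ≠ σ i := fun hh => hj (σ.injective hh)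
      simp [hj, hσ]
  calc aeval (fun j : Fin n => if j = σ i then (C c : MvPolynomial (Fin n) F) else X j) h
      = aeval (fun j : Fin n => if j = σ i then (C c : MvPolynomial (Fin n) F) else X j)
        (rename σ h) := by rw [hren]
    _ = aeval ((fun j : Fin n => if j = σ i then (C c : MvPolynomial (Fin n) F) else X j) ∘ σ)
        h := by rw [aeval_rename]
    _ = aeval (fun j : Fin n =>
          (rename σ : MvPolynomial (Fin n) F →ₐ[F] MvPolynomial (Fin n) F)
            (if j = i then C c else X j)) h := by rw [e1]
    _ = (rename σ) (aeval (fun j : Fin n => if j = i then (C c : MvPolynomial (Fin n) F)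
          else X j) h) := by rw [← comp_aeval]; rfl
    _ = 0 := by rw [hz]; simp

end Aux

/-- A polynomial in `n` variables over a field `F`, symmetric in the first `k` variables
and in the last `n - k` variables, which vanishes upon the substitution `t₁ := a`
(when `k ≥ 1`) and upon the substitution `tₙ := b` (when `k ≤ n - 1`), is divisible by
`∏_{i<k} (tᵢ - a) · ∏_{i≥k} (tᵢ - b)`. -/
theorem stmt_2 (F : Type*) [Field F] (n k : ℕ) (hn : 1 ≤ n) (hk : k ≤ n) (a b : F)
    (h : MvPolynomial (Fin n) F)
    (hsym₁ : ∀ σ : Equiv.Perm (Fin n), (∀ i : Fin n, k ≤ (i : ℕ) → σ i = i) →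
      MvPolynomial.rename σ h = h)
    (hsym₂ : ∀ σ : Equiv.Perm (Fin n), (∀ i : Fin n, (i : ℕ) < k → σ i = i) →
      MvPolynomial.rename σ h = h)
    (ha : 1 ≤ k → MvPolynomial.aeval
      (fun i : Fin n => if i = (⟨0, hn⟩ : Fin n) then MvPolynomial.C a else MvPolynomial.X i)
      h = 0)
    (hb : k ≤ n - 1 → MvPolynomial.aeval
      (fun i : Fin n => if i = (⟨n - 1, Nat.sub_lt hn Nat.one_pos⟩ : Fin n)
        then MvPolynomial.C b else MvPolynomial.X i) h = 0) :
    (∏ i : Fin n, (if (i : ℕ) < k then MvPolynomial.X i - MvPolynomial.C a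
      else MvPolynomial.X i - MvPolynomial.C b)) ∣ h := by
  set i₀ : Fin n := ⟨0, hn⟩ with hi₀
  set i₁ : Fin n := ⟨n - 1, Nat.sub_lt hn Nat.one_pos⟩ with hi₁
  have key : ∀ i : Fin n, aeval (fun j : Fin n =>
      if j = i then C (if (i : ℕ) < k then a else b) else X j) h = 0 := by
    intro i
    by_cases hik : (i : ℕ) < k
    · rw [if_pos hik]
      have hk1 : 1 ≤ k := Nat.one_le_iff_ne_zero.2 (by omega)
      set σ : Equiv.Perm (Fin n) := Equiv.swap i₀ i with hσ
      have hfix : ∀ j : Fin n, k ≤ (j : ℕ) → σ j = j := by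
        intro j hj
        apply Equiv.swap_apply_of_ne_of_ne
        · intro hh; rw [hh] at hj; simp [hi₀] at hj; omega
        · intro hh; rw [hh] at hj; omega
      have := transfer σ h (hsym₁ σ hfix) i₀ a (ha hk1)
      rwa [hσ, Equiv.swap_apply_left] at this
    · rw [if_neg hik]
      push_neg at hik
      have hkn : k ≤ n - 1 := le_trans hik (by omega)
      set σ : Equiv.Perm (Fin n) := Equiv.swap i₁ i with hσ
      have hfix : ∀ j : Fin n, (j : ℕ) < k → σ j = j := by
        intro j hj
        apply Equiv.swap_apply_of_ne_of_ne
        · intro hh; rw [hh] at hj; simp [hi₁] at hj; omega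
        · intro hh; rw [hh] at hj; omega
      have := transfer σ h (hsym₂ σ hfix) i₁ b (hb hkn)
      rwa [hσ, Equiv.swap_apply_left] at this
  have hdvd : ∀ i : Fin n, (if (i : ℕ) < k then X i - C a else X i - C b) ∣ h := by
    intro i
    have := dvd_of_aeval_eq_zero i (if (i : ℕ) < k then a else b) h (key i)
    by_cases hik : (i : ℕ) < k
    · rw [if_pos hik] at this ⊢; exact this
    · rw [if_neg hik] at this ⊢; exact this
  have main : ∀ s : Finset (Fin n),
      (∏ i ∈ s, (if (i : ℕ) < k then X i - C a else X i - C b)) ∣ h := by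
    intro s
    induction s using Finset.induction_on with
    | empty => simpa using one_dvd h
    | @insert i s his ih =>
      rw [Finset.prod_insert his]
      obtain ⟨c, hc⟩ := ih
      have hp : Prime (if (i : ℕ) < k then X i - C a else X i - C b) := by
        split_ifs <;> exact prime_X_sub_C' _ _
      have hnd : ¬ (if (i : ℕ) < k then X i - C a else X i - C b) ∣
          ∏ j ∈ s, (if (j : ℕ) < k then X j - C a else X j - C b) := by
        rw [hp.dvd_finset_prod_iff]
        rintro ⟨j, hjs, hdd⟩
        have hij : i ≠ j := fun hh => his (hh ▸ hjs)
        revert hdd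
        split_ifs <;> exact not_dvd_of_ne hij _ _
      have h2 : (if (i : ℕ) < k then X i - C a else X i - C b) ∣
          (∏ j ∈ s, (if (j : ℕ) < k then X j - C a else X j - C b)) * c := hc ▸ hdvd i
      obtain ⟨d, hd⟩ := (hp.2.2 _ _ h2).resolve_left hnd
      exact ⟨d, by rw [hc, hd]; ring⟩
  exact main Finset.univ
end

section
/- Define polynomials p_α ∈ ℚ[X] recursively by p_0(X) = 1 and p_{α+1}(X) = 4X²·(p_α(X) − p_α(X−1)) + 4X·p_α(X−1). Then for all integers n ≥ 0 and α ≥ 0, the following binomial-sum identity holds: Σ_{l=0}^{n} C(2n, n−l)·(2l)^{2α+1} = p_α(n) · n · C(2n, n), where C(m, j) denotes the binomial coefficient. -/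
open Polynomial

/-- The polynomials `p_α` defined by `p_0(X) = 1` and
`p_{α+1}(X) = 4X²·(p_α(X) − p_α(X−1)) + 4X·p_α(X−1)`. -/
noncomputable def pPoly : ℕ → Polynomial ℚ
  | 0 => 1
  | α + 1 => 4 * X ^ 2 * (pPoly α - (pPoly α).comp (X - 1)) + 4 * X * (pPoly α).comp (X - 1)

lemma keyNat (l d : ℕ) :
    (2*l+2*d+2).choose (d+1) * ((d+1) * (2*l+d+1))
      = (2*l+2*d+2) * ((2*l+2*d+1) * (2*l+2*d).choose d) := by
  have h1 := Nat.add_one_mul_choose_eq (2*l+2*d+1) d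
  have h2 := Nat.choose_succ_right_eq (2*l+2*d+1) d
  have h3 := Nat.add_one_mul_choose_eq (2*l+2*d) d
  rw [show 2*l+2*d+1+1 = 2*l+2*d+2 from by omega] at h1
  rw [show 2*l+2*d+1 - d = 2*l+d+1 from by omega] at h2
  rw [show 2*l+2*d+1 = 2*l+2*d+1 from rfl] at h3
  calc (2*l+2*d+2).choose (d+1) * ((d+1) * (2*l+d+1))
      = ((2*l+2*d+2).choose (d+1) * (d+1)) * (2*l+d+1) := by ring
    _ = ((2*l+2*d+2) * (2*l+2*d+1).choose d) * (2*l+d+1) := by rw [← h1]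
    _ = (2*l+2*d+2) * ((2*l+2*d+1).choose d * (2*l+d+1)) := by ring
    _ = (2*l+2*d+2) * ((2*l+2*d+1).choose (d+1) * (d+1)) := by rw [← h2]
    _ = (2*l+2*d+2) * ((2*l+2*d+1) * (2*l+2*d).choose d) := by rw [h3]

lemma base_term (n l : ℕ) (h : l < n) :
    ((2*n).choose (n-l) : ℚ) * (2*l)
      = ((n:ℚ)+l) * ((2*n).choose (n-l)) - ((n:ℚ)+(l+1)) * ((2*n).choose (n-(l+1))) := by
  obtain ⟨d, rfl⟩ : ∃ d, n = l + d + 1 := ⟨n - l - 1, by omega⟩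
  have key := Nat.choose_succ_right_eq (2*(l+d+1)) d
  rw [show 2*(l+d+1) - d = 2*l+d+2 from by omega] at key
  have keyQ : ((2*(l+d+1)).choose (d+1) : ℚ) * (d+1)
      = ((2*(l+d+1)).choose d) * (2*l+d+2) := by exact_mod_cast key
  rw [show l+d+1-l = d+1 from by omega, show l+d+1-(l+1) = d from by omega]
  push_cast
  push_cast at keyQ
  linear_combination -keyQ

lemma step_term (m l α : ℕ) (h : l ≤ m) :
    ((2*(m+1)).choose (m+1-l) : ℚ) * (2*l)^(2*α+3)
      = 4*((m:ℚ)+1)^2 * ((2*(m+1)).choose (m+1-l)) * (2*l)^(2*α+1)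
        - 8*((m:ℚ)+1)*(2*(m:ℚ)+1) * ((2*m).choose (m-l)) * (2*l)^(2*α+1) := by
  obtain ⟨d, rfl⟩ : ∃ d, m = l + d := ⟨m - l, by omega⟩
  have key := keyNat l d
  have keyQ : ((2*l+2*d+2).choose (d+1) : ℚ) * (((d:ℚ)+1) * (2*(l:ℚ)+(d:ℚ)+1))
      = (2*(l:ℚ)+2*(d:ℚ)+2) * ((2*(l:ℚ)+2*(d:ℚ)+1) * ((2*l+2*d).choose d : ℚ)) := by
    exact_mod_cast key
  rw [show l+d+1-l = d+1 from by omega, show l+d-l = d from by omega,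
    show 2*(l+d+1) = 2*l+2*d+2 from by omega, show 2*(l+d) = 2*l+2*d from by omega]
  push_cast
  linear_combination (-4*(2*(l:ℚ))^(2*α+1)) * keyQ

/-- The binomial-sum identity
`Σ_{l=0}^{n} C(2n, n−l)·(2l)^{2α+1} = p_α(n) · n · C(2n, n)`. -/
theorem stmt_3 (n α : ℕ) :
    ∑ l ∈ Finset.range (n + 1), ((2 * n).choose (n - l) : ℚ) * (2 * l : ℚ) ^ (2 * α + 1)
      = (pPoly α).eval (n : ℚ) * (n : ℚ) * ((2 * n).choose n : ℚ) := by
  induction α generalizing n with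
  | zero =>
    simp only [pPoly, eval_one, one_mul]
    rw [Finset.sum_range_succ]
    have h1 : ∑ l ∈ Finset.range n, ((2*n).choose (n-l):ℚ) * (2*l)^(2*0+1)
        = ∑ l ∈ Finset.range n,
            ((fun k : ℕ => ((n:ℚ)+k) * ((2*n).choose (n-k))) l
              - (fun k : ℕ => ((n:ℚ)+k) * ((2*n).choose (n-k))) (l+1)) := by
      refine Finset.sum_congr rfl fun l hl => ?_
      have := base_term n l (Finset.mem_range.mp hl)
      simp only [pow_succ, pow_zero, one_mul]
      push_cast
      push_cast at this
      linarith [this]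
    rw [h1, Finset.sum_range_sub']
    simp only [Nat.sub_self, Nat.sub_zero, Nat.choose_zero_right, Nat.cast_one, Nat.cast_zero]
    push_cast
    ring
  | succ α ih =>
    rcases n with _ | m
    · simp
    have ihn := ih (m+1)
    have ihm := ih m
    have hsum : ∑ l ∈ Finset.range (m+1+1), ((2*(m+1)).choose (m+1-l) : ℚ) * (2*l)^(2*(α+1)+1)
        = 4*((m:ℚ)+1)^2 * (∑ l ∈ Finset.range (m+1+1),
              ((2*(m+1)).choose (m+1-l):ℚ) * (2*l)^(2*α+1))
          - 8*((m:ℚ)+1)*(2*(m:ℚ)+1) * (∑ l ∈ Finset.range (m+1),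
              ((2*m).choose (m-l):ℚ) * (2*l)^(2*α+1)) := by
      rw [Finset.sum_range_succ, Finset.sum_range_succ
        (fun l => ((2*(m+1)).choose (m+1-l):ℚ) * (2*l)^(2*α+1)) (m+1)]
      have hterm : ∀ l ∈ Finset.range (m+1),
          ((2*(m+1)).choose (m+1-l) : ℚ) * (2*l)^(2*(α+1)+1)
            = 4*((m:ℚ)+1)^2 * (((2*(m+1)).choose (m+1-l):ℚ) * (2*l)^(2*α+1))
              - 8*((m:ℚ)+1)*(2*(m:ℚ)+1) * (((2*m).choose (m-l):ℚ) * (2*l)^(2*α+1)) := by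
        intro l hl
        have h' := step_term m l α (Nat.lt_succ_iff.mp (Finset.mem_range.mp hl))
        rw [show 2*(α+1)+1 = 2*α+3 from by omega]
        linarith [h']
      rw [Finset.sum_congr rfl hterm, Finset.sum_sub_distrib, ← Finset.mul_sum, ← Finset.mul_sum]
      have hlast : ((2*(m+1)).choose (m+1-(m+1)) : ℚ) * (2*(m+1):ℚ)^(2*(α+1)+1)
          = 4*((m:ℚ)+1)^2 * (((2*(m+1)).choose (m+1-(m+1)):ℚ) * (2*(m+1):ℚ)^(2*α+1)) := by
        rw [show 2*(α+1)+1 = (2*α+1)+2 from by omega]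
        push_cast
        ring
      push_cast
      push_cast at hlast
      linarith [hlast]
    have key0 := keyNat 0 m
    have key0Q : ((2*m+2).choose (m+1) : ℚ) * (((m:ℚ)+1) * ((m:ℚ)+1))
        = (2*(m:ℚ)+2) * ((2*(m:ℚ)+1) * ((2*m).choose m : ℚ)) := by
      have := keyNat 0 m
      simp only [Nat.mul_zero, Nat.zero_add, zero_add, mul_zero] at this
      exact_mod_cast this
    rw [pPoly]
    simp only [eval_add, eval_mul, eval_sub, eval_pow, eval_X, eval_comp, eval_one,
      eval_ofNat]
    have hev : ((m:ℚ)+1) - 1 = (m:ℚ) := by ring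
    push_cast
    push_cast at hsum ihn ihm key0Q
    rw [hsum, ihn, ihm]
    rw [hev]
    rw [show 2*(m+1) = 2*m+2 from by omega]
    linear_combination (4*(m:ℚ)*((pPoly α).eval (m:ℚ))) * key0Q
end

section
/- For every real number z > 1, setting x = z + 1/z, the following identity holds: ln(1 + z^{−2}) = Σ_{u=0}^∞ ((2u+1)! / ((u+1)!)²) · x^{−2u−2}, and the series on the right converges absolutely. -/
open Real

lemma cb_le_real (n : ℕ) : (Nat.centralBinom n : ℝ) ≤ 4 ^ n := by
  have h1 : Nat.centralBinom n ≤ 4 ^ n := by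
    rw [Nat.centralBinom_eq_two_mul_choose]
    calc (2*n).choose n ≤ (2*n+1).choose n := Nat.choose_le_choose n (by omega)
    _ ≤ 4 ^ n := Nat.choose_middle_le_pow n
  calc (Nat.centralBinom n : ℝ) ≤ ((4:ℕ)^n : ℕ) := by exact_mod_cast h1
  _ = 4 ^ n := by push_cast; ring

lemma cb_summable {y : ℝ} (h : |y| < 4⁻¹) :
    Summable (fun n : ℕ => (Nat.centralBinom n : ℝ) * y ^ n) := by
  apply Summable.of_norm_bounded (g := fun n => (4 * |y|) ^ n)
    (summable_geometric_of_lt_one (by positivity) (by linarith))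
  intro n
  rw [norm_mul, norm_pow, Real.norm_eq_abs, Real.norm_eq_abs, abs_of_nonneg (by positivity : (0:ℝ) ≤ (Nat.centralBinom n : ℝ)), mul_pow]
  gcongr
  exact cb_le_real n

lemma summable_n_pow {r : ℝ} (h0 : 0 < r) (h : r < 1) :
    Summable (fun n : ℕ => (n : ℝ) * r ^ (n - 1)) := by
  have h1 : Summable (fun n : ℕ => (n:ℝ) ^ 1 * r ^ n) :=
    summable_pow_mul_geometric_of_norm_lt_one 1 (by rwa [Real.norm_eq_abs, abs_of_pos h0])
  refine (h1.mul_right r⁻¹).congr fun n => ?_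
  cases n with
  | zero => simp
  | succ m => simp [pow_succ, mul_assoc, mul_inv_cancel₀ (ne_of_gt h0)]

noncomputable def Hfun (w : ℝ) : ℝ := ∑' n : ℕ, (Nat.centralBinom n : ℝ) * w ^ n

lemma Hfun_zero : Hfun 0 = 1 := by
  rw [Hfun, tsum_eq_single 0 (by intro n hn; simp [zero_pow hn])]
  simp

set_option maxHeartbeats 1000000 in
lemma Hfun_deriv_eq {t' y : ℝ} (ht0 : 0 < t') (ht1 : t' < 4⁻¹) (hy : y ∈ Set.Ioo (-t') t') :
    ∃ S : ℝ, HasDerivAt Hfun S y ∧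
      HasSum (fun n : ℕ => (Nat.centralBinom n : ℝ) * ((n : ℝ) * y ^ (n - 1))) S ∧
      S * (1 - 4 * y) = 2 * Hfun y := by
  set g : ℕ → ℝ → ℝ := fun n w => (Nat.centralBinom n : ℝ) * w ^ n with hg_def
  set g' : ℕ → ℝ → ℝ := fun n w => (Nat.centralBinom n : ℝ) * ((n : ℝ) * w ^ (n - 1)) with hg'_def
  set u : ℕ → ℝ := fun n => 4 * ((n : ℝ) * (4 * t') ^ (n - 1)) with hu_def
  have hu : Summable u := (summable_n_pow (by linarith) (by linarith)).mul_left 4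
  have hgderiv : ∀ n y, y ∈ Set.Ioo (-t') t' → HasDerivAt (g n) (g' n y) y := by
    intro n y _
    exact (hasDerivAt_pow n y).const_mul _
  have hbound : ∀ n y, y ∈ Set.Ioo (-t') t' → ‖g' n y‖ ≤ u n := by
    intro n y hy
    have hya : |y| ≤ t' := by
      rw [abs_le]; constructor <;> [linarith [hy.1]; linarith [hy.2]]
    cases n with
    | zero => simp [hg'_def, hu_def]
    | succ m =>
      simp only [hg'_def, hu_def, norm_mul, Real.norm_eq_abs, Nat.succ_sub_one]
      rw [abs_of_nonneg (by positivity : (0:ℝ) ≤ (Nat.centralBinom (m+1) : ℝ)),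
        abs_of_nonneg (by positivity : (0:ℝ) ≤ ((m+1 : ℕ) : ℝ)), abs_pow]
      calc (Nat.centralBinom (m+1) : ℝ) * (((m+1:ℕ):ℝ) * |y| ^ m)
          ≤ 4 ^ (m+1) * (((m+1:ℕ):ℝ) * t' ^ m) := by
            gcongr <;> first
              | positivity
              | exact cb_le_real _
              | exact hya
              | exact abs_nonneg y
      _ = 4 * (((m+1:ℕ):ℝ) * (4 * t') ^ m) := by rw [mul_pow]; push_cast; ring
  have h0mem : (0 : ℝ) ∈ Set.Ioo (-t') t' := by constructor <;> linarith
  have hsum0 : Summable fun n => g n 0 := by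
    apply cb_summable; rw [abs_zero]; linarith
  have hd : HasDerivAt (fun z => ∑' n, g n z) (∑' n, g' n y) y :=
    hasDerivAt_tsum_of_isPreconnected hu isOpen_Ioo
      (convex_Ioo _ _).isPreconnected hgderiv hbound h0mem hsum0 hy
  have hdH : HasDerivAt Hfun (∑' n, g' n y) y := hd
  have hsummy : Summable fun n => g n y := by
    apply cb_summable
    rw [abs_lt]; constructor <;> [linarith [hy.1]; linarith [hy.2]]
  have hsummy' : Summable fun n => g' n y :=
    hu.of_norm_bounded (fun n => hbound n y hy)
  refine ⟨∑' n, g' n y, hdH, hsummy'.hasSum, ?_⟩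
  -- the recurrence
  have hs : HasSum (fun n => g n y) (Hfun y) := hsummy.hasSum
  have hs1 : HasSum (fun n => g' n y) (∑' n, g' n y) := hsummy'.hasSum
  set S := ∑' n, g' n y
  have hshift : HasSum (fun n => g' (n + 1) y) S := by
    rw [hasSum_nat_add_iff (f := fun n => g' n y) 1]
    simpa [hg'_def] using hs1
  have hmul : HasSum (fun n => 4 * (y * g' n y) + 2 * g n y) (4 * (y * S) + 2 * Hfun y) :=
    ((hs1.mul_left y).mul_left 4).add (hs.mul_left 2)
  have heq : ∀ n : ℕ, g' (n + 1) y = 4 * (y * g' n y) + 2 * g n y := by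
    intro n
    have hrec : ((n + 1 : ℕ) : ℝ) * (Nat.centralBinom (n + 1) : ℝ)
        = 2 * (2 * (n : ℝ) + 1) * (Nat.centralBinom n : ℝ) := by
      have := Nat.succ_mul_centralBinom_succ n
      have : ((n+1) * Nat.centralBinom (n+1) : ℕ) = (2 * (2*n+1) * Nat.centralBinom n : ℕ) := this
      exact_mod_cast this
    have hyp : y * ((n : ℝ) * y ^ (n - 1)) = (n : ℝ) * y ^ n := by
      cases n with
      | zero => simp
      | succ m => rw [Nat.add_sub_cancel]; ring
    simp only [hg'_def, hg_def, Nat.add_sub_cancel]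
    calc (Nat.centralBinom (n+1) : ℝ) * (((n+1:ℕ)) * y ^ n)
        = (((n+1:ℕ):ℝ) * (Nat.centralBinom (n+1):ℝ)) * y ^ n := by ring
    _ = (2 * (2 * (n:ℝ) + 1) * (Nat.centralBinom n : ℝ)) * y ^ n := by rw [hrec]
    _ = 4 * ((Nat.centralBinom n : ℝ) * ((n:ℝ) * y ^ n)) + 2 * ((Nat.centralBinom n : ℝ) * y ^ n) := by ring
    _ = 4 * (y * ((Nat.centralBinom n : ℝ) * ((n : ℝ) * y ^ (n-1)))) + 2 * ((Nat.centralBinom n : ℝ) * y ^ n) := by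
        rw [show y * ((Nat.centralBinom n : ℝ) * ((n : ℝ) * y ^ (n-1))) = (Nat.centralBinom n : ℝ) * (y * ((n : ℝ) * y ^ (n-1))) by ring, hyp]
  have hmul' : HasSum (fun n => g' (n + 1) y) (4 * (y * S) + 2 * Hfun y) := by
    rw [show (fun n => g' (n+1) y) = (fun n => 4 * (y * g' n y) + 2 * g n y) from funext fun n => heq n]
    exact hmul
  have hS : S = 4 * (y * S) + 2 * Hfun y := hshift.unique hmul'
  linarith [hS]

lemma Hfun_eq {w : ℝ} (h0 : 0 ≤ w) (h1 : 4 * w < 1) :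
    Hfun w = (Real.sqrt (1 - 4 * w))⁻¹ := by
  set t' : ℝ := (w + 4⁻¹) / 2 with ht'
  have ht0 : 0 < t' := by rw [ht']; linarith
  have ht1 : t' < 4⁻¹ := by rw [ht']; linarith
  have hwt : w < t' := by rw [ht']; linarith
  set R : ℝ → ℝ := fun y => Hfun y * Real.sqrt (1 - 4 * y) with hR
  have hRderiv : ∀ y ∈ Set.uIcc 0 w, HasDerivAt R 0 y := by
    intro y hy
    rw [Set.uIcc_of_le h0] at hy
    have hmem : y ∈ Set.Ioo (-t') t' := ⟨by linarith [hy.1], by linarith [hy.2]⟩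
    obtain ⟨S, hdH, _, hSrel⟩ := Hfun_deriv_eq ht0 ht1 hmem
    have hypos : 0 < 1 - 4 * y := by linarith [hy.2]
    have hsq : Real.sqrt (1 - 4 * y) ≠ 0 := by positivity
    have hsqrt : HasDerivAt (fun y : ℝ => Real.sqrt (1 - 4 * y))
        (-2 / Real.sqrt (1 - 4 * y)) y := by
      have hinner : HasDerivAt (fun y : ℝ => 1 - 4 * y) (-4) y := by
        simpa using ((hasDerivAt_id' y).const_mul 4).const_sub (1:ℝ)
      have := (Real.hasDerivAt_sqrt (ne_of_gt hypos)).comp y hinner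
      refine this.congr_deriv ?_
      field_simp
      ring
    have hprod := hdH.mul hsqrt
    refine hprod.congr_deriv ?_
    have h3 : S * Real.sqrt (1 - 4 * y) * Real.sqrt (1 - 4 * y) = 2 * Hfun y := by
      rw [mul_assoc, Real.mul_self_sqrt hypos.le]; linarith [hSrel]
    field_simp
    linarith [h3]
  have hint : ∫ s in (0:ℝ)..w, (0:ℝ) = R w - R 0 :=
    intervalIntegral.integral_eq_sub_of_hasDerivAt hRderiv (intervalIntegrable_const)
  have hR0 : R 0 = 1 := by simp [hR, Hfun_zero]
  have hRw : R w = 1 := by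
    have : (0:ℝ) = R w - R 0 := by simpa using hint
    rw [hR0] at this; linarith
  have hRw' : Hfun w * Real.sqrt (1 - 4 * w) = 1 := by rw [hR] at hRw; exact hRw
  exact eq_inv_of_mul_eq_one_right (by linarith [mul_comm (Hfun w) (Real.sqrt (1 - 4 * w))])

lemma cR_rel (u : ℕ) :
    ((2 * u + 1).factorial : ℝ) / (((u + 1).factorial : ℝ)) ^ 2 * ((u : ℝ) + 1)
      = (Nat.centralBinom (u + 1) : ℝ) / 2 := by
  have key : Nat.centralBinom (u + 1) * ((u + 1).factorial * (u + 1).factorial)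
      = (2 * u + 2) * (2 * u + 1).factorial := by
    have h := Nat.choose_mul_factorial_mul_factorial (show u + 1 ≤ 2 * (u + 1) by omega)
    have h2 : 2 * (u + 1) - (u + 1) = u + 1 := by omega
    rw [h2] at h
    have h3 : (2 * (u + 1)).factorial = (2 * u + 2) * (2 * u + 1).factorial := by
      rw [show 2 * (u + 1) = (2 * u + 1) + 1 by omega, Nat.factorial_succ]
    rw [Nat.centralBinom_eq_two_mul_choose, ← mul_assoc, h, h3]
  have hf : (((u + 1).factorial : ℕ) : ℝ) ≠ 0 := Nat.cast_ne_zero.mpr (Nat.factorial_ne_zero _)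
  have keyR : (Nat.centralBinom (u + 1) : ℝ) * (((u + 1).factorial : ℝ) * ((u + 1).factorial : ℝ))
      = (2 * (u : ℝ) + 2) * ((2 * u + 1).factorial : ℝ) := by exact_mod_cast key
  field_simp
  linear_combination -keyR

noncomputable def Dfun (s : ℝ) : ℝ :=
  ∑' u : ℕ, (((2 * u + 1).factorial : ℝ) / (((u + 1).factorial : ℝ)) ^ 2) * (((u : ℝ) + 1) * s ^ u)

lemma D_eq_phi {s : ℝ} (h0 : 0 ≤ s) (h1 : 4 * s < 1) :
    Dfun s = 2 / (Real.sqrt (1 - 4 * s) * (1 + Real.sqrt (1 - 4 * s))) := by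
  rcases eq_or_lt_of_le h0 with hs0 | hs0
  · rw [← hs0]
    rw [Dfun, tsum_eq_single 0 (by intro n hn; simp [zero_pow hn])]
    norm_num [Nat.factorial]
  · have habs : |s| < 4⁻¹ := by rw [abs_of_pos hs0]; linarith
    have hsumH : HasSum (fun n : ℕ => (Nat.centralBinom n : ℝ) * s ^ n) (Hfun s) :=
      (cb_summable habs).hasSum
    have hshift : HasSum (fun u : ℕ => (Nat.centralBinom (u + 1) : ℝ) * s ^ (u + 1))
        (Hfun s - 1) := by
      rw [hasSum_nat_add_iff (f := fun n : ℕ => (Nat.centralBinom n : ℝ) * s ^ n) 1]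
      simpa using hsumH
    have hmul := hshift.mul_right (2 * s)⁻¹
    have hne : s ≠ 0 := ne_of_gt hs0
    have hcongr : ∀ u : ℕ,
        (((2 * u + 1).factorial : ℝ) / (((u + 1).factorial : ℝ)) ^ 2) * (((u : ℝ) + 1) * s ^ u)
          = (Nat.centralBinom (u + 1) : ℝ) * s ^ (u + 1) * (2 * s)⁻¹ := by
      intro u
      rw [← mul_assoc, cR_rel u, pow_succ]
      field_simp
    have hD : HasSum (fun u : ℕ =>
        (((2 * u + 1).factorial : ℝ) / (((u + 1).factorial : ℝ)) ^ 2) * (((u : ℝ) + 1) * s ^ u))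
        ((Hfun s - 1) * (2 * s)⁻¹) := by
      rw [show (fun u : ℕ =>
        (((2 * u + 1).factorial : ℝ) / (((u + 1).factorial : ℝ)) ^ 2) * (((u : ℝ) + 1) * s ^ u))
        = fun u => (Nat.centralBinom (u + 1) : ℝ) * s ^ (u + 1) * (2 * s)⁻¹ from
        funext hcongr]
      exact hmul
    rw [Dfun, hD.tsum_eq, Hfun_eq h0 h1]
    have hq : 0 < Real.sqrt (1 - 4 * s) := Real.sqrt_pos.mpr (by linarith)
    have hq2 : Real.sqrt (1 - 4 * s) * Real.sqrt (1 - 4 * s) = 1 - 4 * s :=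
      Real.mul_self_sqrt (by linarith)
    have hq1 : 1 + Real.sqrt (1 - 4 * s) ≠ 0 := by positivity
    field_simp
    nlinarith [hq2]

lemma integral_phi {t : ℝ} (h0 : 0 < t) (h1 : 4 * t < 1) :
    ∫ s in (0:ℝ)..t, 2 / (Real.sqrt (1 - 4 * s) * (1 + Real.sqrt (1 - 4 * s)))
      = Real.log 2 - Real.log (1 + Real.sqrt (1 - 4 * t)) := by
  have hcont : ContinuousOn (fun s : ℝ => 2 / (Real.sqrt (1 - 4 * s) * (1 + Real.sqrt (1 - 4 * s))))
      (Set.uIcc 0 t) := by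
    apply ContinuousOn.div continuousOn_const
    · apply ContinuousOn.mul
      · exact (Real.continuous_sqrt.comp (by continuity)).continuousOn
      · exact (continuous_const.add (Real.continuous_sqrt.comp (by continuity))).continuousOn
    · intro y hy
      rw [Set.uIcc_of_le h0.le] at hy
      have hypos : 0 < 1 - 4 * y := by linarith [hy.2]
      have h2 : 0 < Real.sqrt (1 - 4 * y) := Real.sqrt_pos.mpr hypos
      positivity
  have hderiv : ∀ y ∈ Set.uIcc 0 t,
      HasDerivAt (fun s : ℝ => -Real.log (1 + Real.sqrt (1 - 4 * s)))
        (2 / (Real.sqrt (1 - 4 * y) * (1 + Real.sqrt (1 - 4 * y)))) y := by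
    intro y hy
    rw [Set.uIcc_of_le h0.le] at hy
    have hypos : 0 < 1 - 4 * y := by linarith [hy.2]
    have hq : 0 < Real.sqrt (1 - 4 * y) := Real.sqrt_pos.mpr hypos
    have hq1 : (0:ℝ) < 1 + Real.sqrt (1 - 4 * y) := by linarith
    have hinner : HasDerivAt (fun s : ℝ => 1 - 4 * s) (-4) y := by
      simpa using ((hasDerivAt_id' y).const_mul 4).const_sub (1:ℝ)
    have hsqrt : HasDerivAt (fun s : ℝ => Real.sqrt (1 - 4 * s))
        (-2 / Real.sqrt (1 - 4 * y)) y := by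
      have := (Real.hasDerivAt_sqrt (ne_of_gt hypos)).comp y hinner
      refine this.congr_deriv ?_
      field_simp; ring
    have hadd : HasDerivAt (fun s : ℝ => 1 + Real.sqrt (1 - 4 * s))
        (-2 / Real.sqrt (1 - 4 * y)) y := by
      exact hsqrt.const_add 1
    have hlog := (Real.hasDerivAt_log (ne_of_gt hq1)).comp y hadd
    have := hlog.neg
    refine this.congr_deriv ?_
    field_simp
  have hFTC := intervalIntegral.integral_eq_sub_of_hasDerivAt hderiv
    (hcont.intervalIntegrable)
  rw [hFTC]
  norm_num [Real.sqrt_one]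
  ring

/-- For real `z > 1` and `x = z + 1/z`,
`ln(1 + z⁻²) = Σ_{u≥0} ((2u+1)!/((u+1)!)²)·x^{−2u−2}`, absolutely convergently. -/
theorem stmt_11 (z x : ℝ) (hz : 1 < z) (hx : x = z + 1 / z) :
    HasSum (fun u : ℕ =>
        (((2 * u + 1).factorial : ℝ) / (((u + 1).factorial : ℝ)) ^ 2) * x⁻¹ ^ (2 * u + 2))
      (Real.log (1 + (z ^ 2)⁻¹)) ∧
    Summable (fun u : ℕ =>
      |(((2 * u + 1).factorial : ℝ) / (((u + 1).factorial : ℝ)) ^ 2) * x⁻¹ ^ (2 * u + 2)|) := by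
  have hz0 : 0 < z := by linarith
  have hx2 : 2 < x := by
    rw [hx]
    have h : 0 < (z - 1) ^ 2 / z := div_pos (by nlinarith) hz0
    have : z + 1 / z - 2 = (z - 1) ^ 2 / z := by field_simp; ring
    linarith
  have hx0 : 0 < x := by linarith
  set t : ℝ := x⁻¹ ^ 2 with ht_def
  have ht0 : 0 < t := by positivity
  have h4t : 4 * t < 1 := by
    have hxx : 4 < x ^ 2 := by nlinarith
    have : t = (x ^ 2)⁻¹ := by rw [ht_def, inv_pow]
    rw [this]
    rw [mul_inv_lt_iff₀ (by positivity)]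
    linarith
  set cR : ℕ → ℝ := fun u => ((2 * u + 1).factorial : ℝ) / (((u + 1).factorial : ℝ)) ^ 2 with hcR
  have hcR_nonneg : ∀ u, 0 ≤ cR u := fun u => by positivity
  have hcR_bnd : ∀ u : ℕ, ∀ s : ℝ, 0 ≤ s → s ≤ t → cR u * (((u:ℝ) + 1) * s ^ u) ≤ 2 * (4 * t) ^ u := by
    intro u s hs0 hst
    have h1 : cR u * (((u:ℝ) + 1) * s ^ u) = (cR u * ((u:ℝ) + 1)) * s ^ u := by ring
    rw [h1, cR_rel u]
    calc (Nat.centralBinom (u + 1) : ℝ) / 2 * s ^ u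
        ≤ 4 ^ (u + 1) / 2 * t ^ u := by
          gcongr <;> first
            | positivity
            | exact cb_le_real _
            | exact hs0
            | exact hst
            | linarith
    _ = 2 * (4 * t) ^ u := by rw [mul_pow, pow_succ]; ring
  have hgeo : Summable (fun u : ℕ => 2 * (4 * t) ^ u) :=
    (summable_geometric_of_lt_one (by positivity) (by linarith)).mul_left 2
  -- summability of the series for Dfun at each s ∈ [0, t]
  have hDsum : ∀ s : ℝ, 0 ≤ s → s ≤ t →
      HasSum (fun u : ℕ => cR u * (((u:ℝ) + 1) * s ^ u)) (Dfun s) := by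
    intro s hs0 hst
    apply Summable.hasSum
    apply Summable.of_norm_bounded hgeo
    intro u
    rw [Real.norm_eq_abs, abs_of_nonneg (by positivity)]
    exact hcR_bnd u s hs0 hst
  -- interchange sum and integral
  have hswap : HasSum (fun u : ℕ => ∫ s in (0:ℝ)..t, cR u * (((u:ℝ) + 1) * s ^ u))
      (∫ s in (0:ℝ)..t, Dfun s) := by
    apply intervalIntegral.hasSum_integral_of_dominated_convergence
      (bound := fun u (_ : ℝ) => 2 * (4 * t) ^ u)
    · intro u
      exact (Continuous.aestronglyMeasurable (by continuity))
    · intro u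
      filter_upwards with s hs
      rw [Set.uIoc_of_le ht0.le] at hs
      have hs0 : (0:ℝ) ≤ s := hs.1.le
      rw [Real.norm_eq_abs, abs_of_nonneg (by positivity : (0:ℝ) ≤ cR u * (((u:ℝ) + 1) * s ^ u))]
      exact hcR_bnd u s hs0 hs.2
    · filter_upwards with s _
      exact hgeo
    · exact intervalIntegrable_const
    · filter_upwards with s hs
      rw [Set.uIoc_of_le ht0.le] at hs
      exact hDsum s hs.1.le hs.2
  -- compute the integrals of the terms
  have hterm : ∀ u : ℕ, (∫ s in (0:ℝ)..t, cR u * (((u:ℝ) + 1) * s ^ u)) = cR u * t ^ (u + 1) := by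
    intro u
    rw [intervalIntegral.integral_const_mul]
    rw [intervalIntegral.integral_const_mul]
    rw [integral_pow]
    have hu1 : ((u:ℝ) + 1) ≠ 0 := by positivity
    field_simp
    simp
  rw [show (fun u : ℕ => ∫ s in (0:ℝ)..t, cR u * (((u:ℝ) + 1) * s ^ u))
      = fun u : ℕ => cR u * t ^ (u + 1) from funext hterm] at hswap
  -- compute the integral of Dfun
  have hDphi : (∫ s in (0:ℝ)..t, Dfun s)
      = ∫ s in (0:ℝ)..t, 2 / (Real.sqrt (1 - 4 * s) * (1 + Real.sqrt (1 - 4 * s))) := by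
    apply intervalIntegral.integral_congr
    intro s hs
    rw [Set.uIcc_of_le ht0.le] at hs
    exact D_eq_phi hs.1 (by linarith [hs.2])
  rw [hDphi, integral_phi ht0 h4t] at hswap
  -- identify the value
  have hd : 0 < z - 1 / z := by
    have : 1 / z < 1 := by rw [div_lt_one hz0]; linarith
    linarith
  have hsqrt : Real.sqrt (1 - 4 * t) = (z - 1 / z) / x := by
    have h1 : 1 - 4 * t = ((z - 1 / z) / x) ^ 2 := by
      rw [ht_def, hx]
      have hzne : z ≠ 0 := ne_of_gt hz0
      have hxne : z + 1 / z ≠ 0 := by positivity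
      field_simp
      ring
    rw [h1, Real.sqrt_sq (by positivity)]
  have hval : Real.log 2 - Real.log (1 + Real.sqrt (1 - 4 * t))
      = Real.log (1 + (z ^ 2)⁻¹) := by
    rw [hsqrt]
    have h2 : 1 + (z - 1 / z) / x = 2 * z / x := by
      rw [hx]; field_simp; ring
    rw [h2, ← Real.log_div two_ne_zero (by positivity)]
    congr 1
    rw [hx]
    field_simp
  rw [hval] at hswap
  -- final rewriting of the terms
  have hpow : ∀ u : ℕ, x⁻¹ ^ (2 * u + 2) = t ^ (u + 1) := by
    intro u
    rw [ht_def, ← pow_mul]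
    ring_nf
  have hfinal : HasSum (fun u : ℕ => cR u * x⁻¹ ^ (2 * u + 2)) (Real.log (1 + (z ^ 2)⁻¹)) := by
    rw [show (fun u : ℕ => cR u * x⁻¹ ^ (2 * u + 2)) = fun u : ℕ => cR u * t ^ (u + 1) from
      funext fun u => by rw [hpow u]]
    exact hswap
  exact ⟨hfinal, hfinal.summable.abs⟩
end

section
/- For all real numbers z₁, z₂, z₃ > 1, setting x_i = z_i + 1/z_i, the following identity holds, with all series on the right converging absolutely: (1/2)·[ ∏_{i=1}^{3}(z_i − 1)^{−2} + ∏_{i=1}^{3}(z_i + 1)^{−2} ] · ∏_{i=1}^{3}(1 − z_i^{−2})^{−1} = Σ_{u₁,u₂,u₃ ≥ 0} ∏_{i=1}^{3} ((2u_i+1)!/u_i!²)·x_i^{−2u_i−2} + Σ_{j=1}^{3} Σ_{u_j ≥ 0; u_i ≥ 1 for i ≠ j} ((2u_j+1)!/u_j!²)·x_j^{−2u_j−2} · ∏_{i ≠ j} ((2u_i)!·u_i/u_i!²)·x_i^{−2u_i−1}. -/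
open Finset Nat

/- ### Combinatorial identities -/

lemma cb_sym (m : ℕ) :
    2 * ∑ k ∈ range (m + 1), k * (centralBinom k * centralBinom (m - k))
      = m * ∑ k ∈ range (m + 1), centralBinom k * centralBinom (m - k) := by
  have hr := Finset.sum_range_reflect
    (fun k => k * (centralBinom k * centralBinom (m - k))) (m + 1)
  simp only [Nat.add_sub_cancel] at hr
  rw [two_mul]; nth_rewrite 2 [← hr]; rw [← Finset.sum_add_distrib, Finset.mul_sum]
  apply Finset.sum_congr rfl
  intro k hk
  have hk' : k ≤ m := by simpa [Nat.lt_succ_iff] using hk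
  have h2 : m - (m - k) = k := by omega
  have h3 : k + (m - k) = m := by omega
  rw [h2, mul_comm (centralBinom (m - k)), ← add_mul, h3]

lemma cb_conv (n : ℕ) :
    ∑ k ∈ range (n + 1), centralBinom k * centralBinom (n - k) = 4 ^ n := by
  induction n with
  | zero => simp [centralBinom]
  | succ n ih =>
    have hT : ∑ k ∈ range (n + 2), k * (centralBinom k * centralBinom (n + 1 - k))
        = 4 * ∑ j ∈ range (n + 1), j * (centralBinom j * centralBinom (n - j))
          + 2 * ∑ j ∈ range (n + 1), centralBinom j * centralBinom (n - j) := by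
      rw [Finset.sum_range_succ' (fun k => k * (centralBinom k * centralBinom (n + 1 - k))) (n + 1)]
      simp only [Nat.zero_mul, add_zero]
      rw [Finset.mul_sum, Finset.mul_sum, ← Finset.sum_add_distrib]
      apply Finset.sum_congr rfl
      intro j hj
      have h1 : n + 1 - (j + 1) = n - j := by omega
      rw [h1, ← mul_assoc, succ_mul_centralBinom_succ]
      ring
    have hsym := cb_sym (n + 1)
    have hsymn := cb_sym n
    have key : (n + 1) * ∑ k ∈ range (n + 2), centralBinom k * centralBinom (n + 1 - k)
        = (n + 1) * (4 * 4 ^ n) := by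
      rw [← hsym, hT, ← ih]
      calc 2 * (4 * ∑ j ∈ range (n + 1), j * (centralBinom j * centralBinom (n - j))
            + 2 * ∑ j ∈ range (n + 1), centralBinom j * centralBinom (n - j))
          = 4 * (2 * ∑ j ∈ range (n + 1), j * (centralBinom j * centralBinom (n - j)))
            + 4 * ∑ j ∈ range (n + 1), centralBinom j * centralBinom (n - j) := by ring
        _ = (n + 1) * (4 * ∑ k ∈ range (n + 1), centralBinom k * centralBinom (n - k)) := by
            rw [hsymn]; ring
    have := Nat.eq_of_mul_eq_mul_left (Nat.succ_pos n) key
    simpa [pow_succ, mul_comm] using this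

lemma cb_le_four_pow (n : ℕ) : centralBinom n ≤ 4 ^ n := by
  induction n with
  | zero => simp [centralBinom]
  | succ n ih =>
    have h := succ_mul_centralBinom_succ n
    have h2 : (n + 1) * centralBinom (n + 1) ≤ (n + 1) * (4 * centralBinom n) := by
      rw [h]; nlinarith [centralBinom_pos n]
    have h3 : centralBinom (n + 1) ≤ 4 * centralBinom n :=
      Nat.le_of_mul_le_mul_left h2 (Nat.succ_pos n)
    calc centralBinom (n + 1) ≤ 4 * centralBinom n := h3
      _ ≤ 4 * 4 ^ n := by omega
      _ = 4 ^ (n + 1) := by rw [pow_succ]; ring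

lemma cb_factorial (u : ℕ) :
    (2 * u).factorial = centralBinom u * (u.factorial * u.factorial) := by
  have h := Nat.choose_mul_factorial_mul_factorial (show u ≤ 2 * u by omega)
  have h2 : 2 * u - u = u := by omega
  rw [h2] at h
  rw [← h, centralBinom]
  ring

/-- The even-type one-variable factor `(2u+1)!/u!² · x^{−2u−2}` in the expansion of the
genus-zero three-point Eynard–Orantin invariant of `x = z + 1/z`, `y = ln z`. -/
noncomputable def evenFactor (x : ℝ) (u : ℕ) : ℝ :=
  ((2 * u + 1).factorial : ℝ) / (u.factorial : ℝ) ^ 2 * x⁻¹ ^ (2 * u + 2)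

/-- The odd-type one-variable factor `(2u)!·u/u!² · x^{−2u−1}` in the expansion of the
genus-zero three-point Eynard–Orantin invariant of `x = z + 1/z`, `y = ln z`. -/
noncomputable def oddFactor (x : ℝ) (u : ℕ) : ℝ :=
  ((2 * u).factorial : ℝ) * (u : ℝ) / (u.factorial : ℝ) ^ 2 * x⁻¹ ^ (2 * u + 1)

lemma evenFactor_nonneg {x : ℝ} (hx : 0 ≤ x) (u : ℕ) : 0 ≤ evenFactor x u := by
  have h := inv_nonneg.mpr hx
  unfold evenFactor
  apply mul_nonneg (by positivity) (pow_nonneg h _)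

lemma oddFactor_nonneg {x : ℝ} (hx : 0 ≤ x) (u : ℕ) : 0 ≤ oddFactor x u := by
  have h := inv_nonneg.mpr hx
  unfold oddFactor
  apply mul_nonneg (by positivity) (pow_nonneg h _)

/- ### One-variable closed forms -/

lemma oneVar {z : ℝ} (hz : 1 < z) :
    HasSum (fun u => evenFactor (z + 1 / z) u) (z ^ 2 * (z ^ 2 + 1) / (z ^ 2 - 1) ^ 3) ∧
    HasSum (fun u => oddFactor (z + 1 / z) (u + 1)) (2 * z ^ 3 / (z ^ 2 - 1) ^ 3) := by
  have hz0 : 0 < z := lt_trans one_pos hz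
  set x : ℝ := z + 1 / z with hxdef
  have hzx : z * x = z ^ 2 + 1 := by rw [hxdef, mul_add, mul_one_div_cancel (ne_of_gt hz0)]; ring
  have hx2 : 2 < x := by nlinarith [sq_nonneg (z - 1)]
  have hx0 : 0 < x := by linarith
  have hxne : x ≠ 0 := ne_of_gt hx0
  set t : ℝ := x⁻¹ ^ 2 with htdef
  have ht0 : 0 < t := by positivity
  have hw : x * x⁻¹ = 1 := mul_inv_cancel₀ hxne
  have hwpos : 0 < x⁻¹ := inv_pos.mpr hx0
  have hwhalf : x⁻¹ < 1 / 2 := by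
    have h2w := mul_lt_mul_of_pos_right hx2 hwpos
    rw [hw] at h2w
    linarith
  have h4t : 4 * t < 1 := by rw [htdef]; nlinarith
  have h4t0 : (0:ℝ) ≤ 4 * t := by positivity
  have hz21 : 0 < z ^ 2 - 1 := by nlinarith
  have hz21' : z ^ 2 - 1 ≠ 0 := ne_of_gt hz21
  have hz2p : (0:ℝ) < z ^ 2 + 1 := by positivity
  have hz2p' : z ^ 2 + 1 ≠ 0 := ne_of_gt hz2p
  -- the basic series
  set g : ℕ → ℝ := fun u => (centralBinom u : ℝ) * t ^ u with hgdef
  set f : ℕ → ℝ := fun u => (u : ℝ) * ((centralBinom u : ℝ) * t ^ u) with hfdef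
  have hg0 : ∀ u, 0 ≤ g u := fun u => by positivity
  have hf0 : ∀ u, 0 ≤ f u := fun u => by positivity
  have hgle : ∀ u, g u ≤ (4 * t) ^ u := by
    intro u
    have : (centralBinom u : ℝ) ≤ 4 ^ u := by exact_mod_cast cb_le_four_pow u
    calc g u ≤ (4:ℝ) ^ u * t ^ u := by
          apply mul_le_mul_of_nonneg_right this (by positivity)
      _ = (4 * t) ^ u := (mul_pow 4 t u).symm
  have hgsum : Summable g :=
    Summable.of_nonneg_of_le hg0 hgle (summable_geometric_of_lt_one h4t0 (by linarith))
  have hfsum : Summable f := by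
    have hb : Summable (fun u : ℕ => (u : ℝ) ^ 1 * (4 * t) ^ u) :=
      summable_pow_mul_geometric_of_norm_lt_one 1
        (by rw [Real.norm_of_nonneg h4t0]; linarith)
    apply Summable.of_nonneg_of_le hf0 _ hb
    intro u
    have : (centralBinom u : ℝ) * t ^ u ≤ (4 * t) ^ u := hgle u
    calc f u ≤ (u : ℝ) * (4 * t) ^ u := by
          apply mul_le_mul_of_nonneg_left this (by positivity)
      _ = (u : ℝ) ^ 1 * (4 * t) ^ u := by ring
  set G : ℝ := ∑' u, g u with hGdef
  set D : ℝ := ∑' u, f u with hDdef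
  have hG : HasSum g G := hgsum.hasSum
  have hD : HasSum f D := hfsum.hasSum
  have hGnn : 0 ≤ G := tsum_nonneg hg0
  have hgnorm : Summable (fun u => ‖g u‖) := by
    simp only [Real.norm_eq_abs]; exact hgsum.abs
  -- Cauchy product
  have hGsq : G * G = (1 - 4 * t)⁻¹ := by
    rw [hGdef, tsum_mul_tsum_eq_tsum_sum_range_of_summable_norm hgnorm hgnorm]
    have hterm : ∀ n : ℕ, ∑ k ∈ range (n + 1), g k * g (n - k) = (4 * t) ^ n := by
      intro n
      have h1 : ∀ k ∈ range (n + 1),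
          g k * g (n - k) = ((centralBinom k * centralBinom (n - k) : ℕ) : ℝ) * t ^ n := by
        intro k hk
        have hk' : k ≤ n := by simpa [Nat.lt_succ_iff] using hk
        have : t ^ k * t ^ (n - k) = t ^ n := by
          rw [← pow_add, Nat.add_sub_cancel' hk']
        push_cast
        rw [hgdef]
        calc (centralBinom k : ℝ) * t ^ k * ((centralBinom (n - k) : ℝ) * t ^ (n - k))
            = (centralBinom k : ℝ) * (centralBinom (n - k) : ℝ) * (t ^ k * t ^ (n - k)) := by ring
          _ = (centralBinom k : ℝ) * (centralBinom (n - k) : ℝ) * t ^ n := by rw [this]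
      rw [Finset.sum_congr rfl h1, ← Finset.sum_mul, ← Nat.cast_sum, cb_conv]
      push_cast [mul_pow]
      try ring
    rw [tsum_congr hterm, tsum_geometric_of_lt_one h4t0 (by linarith)]
  -- value of G
  have hxinv : x⁻¹ = z / (z ^ 2 + 1) := by
    rw [eq_div_iff hz2p', ← hzx]
    first
    | (field_simp; ring)
    | field_simp
  have ht_eq : t = z ^ 2 / (z ^ 2 + 1) ^ 2 := by rw [htdef, hxinv, div_pow]
  have h14 : 1 - 4 * t = (z ^ 2 - 1) ^ 2 / (z ^ 2 + 1) ^ 2 := by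
    rw [ht_eq]; field_simp; ring
  set r : ℝ := (z ^ 2 + 1) / (z ^ 2 - 1) with hrdef
  have hrpos : 0 < r := div_pos hz2p hz21
  have hrsq : r * r = (1 - 4 * t)⁻¹ := by
    rw [h14, inv_div, hrdef, _root_.div_mul_div_comm]
    ring
  have hGr : G = r := by
    have h0 : (G - r) * (G + r) = 0 := by linear_combination hGsq - hrsq
    rcases mul_eq_zero.mp h0 with h | h
    · linarith
    · linarith
  -- shifted series and value of D
  have hf00 : f 0 = 0 := by simp [hfdef]
  have hshift : HasSum (fun u => f (u + 1)) D := by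
    rw [hasSum_nat_add_iff 1]
    simpa [hf00] using hD
  have hpt : ∀ u : ℕ, f (u + 1) = t * (4 * f u + 2 * g u) := by
    intro u
    have hcb : ((u : ℝ) + 1) * (centralBinom (u + 1) : ℝ)
        = 2 * (2 * (u : ℝ) + 1) * (centralBinom u : ℝ) := by
      exact_mod_cast succ_mul_centralBinom_succ u
    simp only [hfdef, hgdef]
    push_cast
    rw [pow_succ]
    linear_combination (t ^ u * t) * hcb
  have hshift' : HasSum (fun u => t * (4 * f u + 2 * g u)) (t * (4 * D + 2 * G)) :=
    ((hD.mul_left 4).add (hG.mul_left 2)).mul_left t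
  have hDeq : D = t * (4 * D + 2 * G) := by
    have h2 : HasSum (fun u => t * (4 * f u + 2 * g u)) D := by
      rw [show (fun u => t * (4 * f u + 2 * g u)) = fun u => f (u + 1) from
        funext fun u => (hpt u).symm]
      exact hshift
    exact h2.unique hshift'
  have h14ne : 1 - 4 * t ≠ 0 := by linarith
  have hDval : D = 2 * z ^ 2 * (z ^ 2 + 1) / (z ^ 2 - 1) ^ 3 := by
    have hlin : D * (1 - 4 * t) = 2 * t * G := by linear_combination hDeq
    have h2 : D * (1 - 4 * t)
        = 2 * z ^ 2 * (z ^ 2 + 1) / (z ^ 2 - 1) ^ 3 * (1 - 4 * t) := by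
      rw [hlin, hGr, hrdef, h14, ht_eq]
      first
      | (field_simp; ring)
      | field_simp
    exact mul_right_cancel₀ h14ne h2
  constructor
  · -- even series
    have hEpt : ∀ u : ℕ, evenFactor x u = t * (2 * f u + g u) := by
      intro u
      have hfac : ((2 * u + 1).factorial : ℝ)
          = (2 * (u : ℝ) + 1) * ((centralBinom u : ℝ) * ((u.factorial : ℝ) * (u.factorial : ℝ))) := by
        have h1 : (2 * u + 1).factorial = (2 * u + 1) * (2 * u).factorial :=
          Nat.factorial_succ (2 * u)
        rw [h1, cb_factorial u]
        push_cast
        ring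
      have hufne : (u.factorial : ℝ) ≠ 0 := by positivity
      have hpw : x⁻¹ ^ (2 * u + 2) = t ^ (u + 1) := by
        have h2 : 2 * u + 2 = 2 * (u + 1) := by omega
        rw [htdef, h2, pow_mul]
      unfold evenFactor
      rw [hfac, hpw, hfdef, hgdef]
      first
      | (field_simp; ring)
      | field_simp
    have hEsum : HasSum (fun u => t * (2 * f u + g u)) (t * (2 * D + G)) :=
      ((hD.mul_left 2).add hG).mul_left t
    have : HasSum (evenFactor x) (t * (2 * D + G)) := by
      rw [show evenFactor x = fun u => t * (2 * f u + g u) from funext hEpt]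
      exact hEsum
    have hval : t * (2 * D + G) = z ^ 2 * (z ^ 2 + 1) / (z ^ 2 - 1) ^ 3 := by
      rw [ht_eq, hDval, hGr, hrdef]
      first
      | (field_simp; ring)
      | field_simp
    rwa [hval] at this
  · -- odd series
    have hOpt : ∀ v : ℕ, oddFactor x v = x⁻¹ * f v := by
      intro v
      have hfac : ((2 * v).factorial : ℝ)
          = (centralBinom v : ℝ) * ((v.factorial : ℝ) * (v.factorial : ℝ)) := by
        rw [cb_factorial v]; push_cast; ring
      have hvfne : (v.factorial : ℝ) ≠ 0 := by positivity
      have hpw : x⁻¹ ^ (2 * v + 1) = x⁻¹ * t ^ v := by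
        rw [htdef, ← pow_mul]
        exact _root_.pow_succ' x⁻¹ (2 * v)
      unfold oddFactor
      rw [hfac, hpw, hfdef]
      first
      | (field_simp; ring)
      | field_simp
    have : HasSum (fun u => oddFactor x (u + 1)) (x⁻¹ * D) := by
      rw [show (fun u => oddFactor x (u + 1)) = fun u => x⁻¹ * f (u + 1) from
        funext fun u => hOpt (u + 1)]
      exact hshift.mul_left x⁻¹
    have hval : x⁻¹ * D = 2 * z ^ 3 / (z ^ 2 - 1) ^ 3 := by
      rw [hxinv, hDval]
      first
      | (field_simp; ring)
      | field_simp
    rwa [hval] at this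

/- ### Triple products -/

set_option maxHeartbeats 1000000 in
lemma tripleProd {f g h : ℕ → ℝ} {a b c : ℝ}
    (hf : HasSum f a) (hg : HasSum g b) (hh : HasSum h c)
    (hf0 : ∀ n, 0 ≤ f n) (hg0 : ∀ n, 0 ≤ g n) (hh0 : ∀ n, 0 ≤ h n) :
    Summable (fun u : ℕ × ℕ × ℕ => |f u.1 * g u.2.1 * h u.2.2|) ∧
    (∑' u : ℕ × ℕ × ℕ, f u.1 * g u.2.1 * h u.2.2) = a * b * c := by
  have nf : Summable (fun n => ‖f n‖) := by
    simp only [Real.norm_eq_abs]; exact hf.summable.abs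
  have ng : Summable (fun n => ‖g n‖) := by
    simp only [Real.norm_eq_abs]; exact hg.summable.abs
  have nh : Summable (fun n => ‖h n‖) := by
    simp only [Real.norm_eq_abs]; exact hh.summable.abs
  have hGH : Summable (fun p : ℕ × ℕ => g p.1 * h p.2) :=
    summable_mul_of_summable_norm ng nh
  have nGH : Summable (fun p : ℕ × ℕ => ‖g p.1 * h p.2‖) := by
    simp only [Real.norm_eq_abs]; exact hGH.abs
  have hFGH : Summable (fun q : ℕ × ℕ × ℕ => f q.1 * (g q.2.1 * h q.2.2)) :=
    summable_mul_of_summable_norm (f := f) (g := fun p : ℕ × ℕ => g p.1 * h p.2) nf nGH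
  constructor
  · have heq : (fun u : ℕ × ℕ × ℕ => |f u.1 * g u.2.1 * h u.2.2|)
        = fun u : ℕ × ℕ × ℕ => |f u.1 * (g u.2.1 * h u.2.2)| := by
      funext u; rw [mul_assoc]
    rw [heq]; exact hFGH.abs
  · calc (∑' u : ℕ × ℕ × ℕ, f u.1 * g u.2.1 * h u.2.2)
        = ∑' u : ℕ × ℕ × ℕ, f u.1 * (g u.2.1 * h u.2.2) :=
          tsum_congr fun u => by rw [mul_assoc]
      _ = (∑' n, f n) * (∑' p : ℕ × ℕ, g p.1 * h p.2) :=
          (tsum_mul_tsum_of_summable_norm (f := f)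
            (g := fun p : ℕ × ℕ => g p.1 * h p.2) nf nGH).symm
      _ = (∑' n, f n) * ((∑' n, g n) * (∑' n, h n)) := by
          rw [← tsum_mul_tsum_of_summable_norm ng nh]
      _ = a * b * c := by rw [hf.tsum_eq, hg.tsum_eq, hh.tsum_eq, mul_assoc]

set_option maxHeartbeats 4000000 in
/-- The genus-zero three-point expansion for the curve `x = z + 1/z`: for `zᵢ > 1` and
`xᵢ = zᵢ + 1/zᵢ`,
`(1/2)[∏(zᵢ−1)⁻² + ∏(zᵢ+1)⁻²]·∏(1−zᵢ⁻²)⁻¹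
  = Σ_{u₁,u₂,u₃≥0} ∏ᵢ (2uᵢ+1)!/uᵢ!² xᵢ^{−2uᵢ−2}
  + Σ_{j} Σ_{u_j≥0, uᵢ≥1 (i≠j)} (2u_j+1)!/u_j!² x_j^{−2u_j−2} ∏_{i≠j} (2uᵢ)!uᵢ/uᵢ!² xᵢ^{−2uᵢ−1}`,
with all series absolutely convergent. -/
theorem stmt_13 (z₁ z₂ z₃ x₁ x₂ x₃ : ℝ) (h₁ : 1 < z₁) (h₂ : 1 < z₂) (h₃ : 1 < z₃)
    (hx₁ : x₁ = z₁ + 1 / z₁) (hx₂ : x₂ = z₂ + 1 / z₂) (hx₃ : x₃ = z₃ + 1 / z₃) :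
    Summable (fun u : ℕ × ℕ × ℕ =>
      |evenFactor x₁ u.1 * evenFactor x₂ u.2.1 * evenFactor x₃ u.2.2|) ∧
    Summable (fun u : ℕ × ℕ × ℕ =>
      |evenFactor x₁ u.1 * oddFactor x₂ (u.2.1 + 1) * oddFactor x₃ (u.2.2 + 1)|) ∧
    Summable (fun u : ℕ × ℕ × ℕ =>
      |oddFactor x₁ (u.1 + 1) * evenFactor x₂ u.2.1 * oddFactor x₃ (u.2.2 + 1)|) ∧
    Summable (fun u : ℕ × ℕ × ℕ =>
      |oddFactor x₁ (u.1 + 1) * oddFactor x₂ (u.2.1 + 1) * evenFactor x₃ u.2.2|) ∧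
    (1 / 2) * ((z₁ - 1)⁻¹ ^ 2 * (z₂ - 1)⁻¹ ^ 2 * (z₃ - 1)⁻¹ ^ 2 +
        (z₁ + 1)⁻¹ ^ 2 * (z₂ + 1)⁻¹ ^ 2 * (z₃ + 1)⁻¹ ^ 2) *
      ((1 - (z₁ ^ 2)⁻¹)⁻¹ * (1 - (z₂ ^ 2)⁻¹)⁻¹ * (1 - (z₃ ^ 2)⁻¹)⁻¹)
      = (∑' u : ℕ × ℕ × ℕ, evenFactor x₁ u.1 * evenFactor x₂ u.2.1 * evenFactor x₃ u.2.2) +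
        ((∑' u : ℕ × ℕ × ℕ,
            evenFactor x₁ u.1 * oddFactor x₂ (u.2.1 + 1) * oddFactor x₃ (u.2.2 + 1)) +
          (∑' u : ℕ × ℕ × ℕ,
            oddFactor x₁ (u.1 + 1) * evenFactor x₂ u.2.1 * oddFactor x₃ (u.2.2 + 1)) +
          (∑' u : ℕ × ℕ × ℕ,
            oddFactor x₁ (u.1 + 1) * oddFactor x₂ (u.2.1 + 1) * evenFactor x₃ u.2.2)) := by
  subst hx₁ hx₂ hx₃
  obtain ⟨hE₁, hO₁⟩ := oneVar h₁
  obtain ⟨hE₂, hO₂⟩ := oneVar h₂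
  obtain ⟨hE₃, hO₃⟩ := oneVar h₃
  have hx₁0 : (0:ℝ) ≤ z₁ + 1 / z₁ := by positivity
  have hx₂0 : (0:ℝ) ≤ z₂ + 1 / z₂ := by positivity
  have hx₃0 : (0:ℝ) ≤ z₃ + 1 / z₃ := by positivity
  have eN₁ := evenFactor_nonneg hx₁0
  have eN₂ := evenFactor_nonneg hx₂0
  have eN₃ := evenFactor_nonneg hx₃0
  have oN₁ : ∀ n, 0 ≤ oddFactor (z₁ + 1 / z₁) (n + 1) := fun n => oddFactor_nonneg hx₁0 _
  have oN₂ : ∀ n, 0 ≤ oddFactor (z₂ + 1 / z₂) (n + 1) := fun n => oddFactor_nonneg hx₂0 _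
  have oN₃ : ∀ n, 0 ≤ oddFactor (z₃ + 1 / z₃) (n + 1) := fun n => oddFactor_nonneg hx₃0 _
  obtain ⟨S1, T1⟩ := tripleProd hE₁ hE₂ hE₃ eN₁ eN₂ eN₃
  obtain ⟨S2, T2⟩ := tripleProd hE₁ hO₂ hO₃ eN₁ oN₂ oN₃
  obtain ⟨S3, T3⟩ := tripleProd hO₁ hE₂ hO₃ oN₁ eN₂ oN₃
  obtain ⟨S4, T4⟩ := tripleProd hO₁ hO₂ hE₃ oN₁ oN₂ eN₃
  refine ⟨S1, S2, S3, S4, ?_⟩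
  rw [T1, T2, T3, T4]
  have hz₁0 : z₁ ≠ 0 := by positivity
  have hz₂0 : z₂ ≠ 0 := by positivity
  have hz₃0 : z₃ ≠ 0 := by positivity
  have hm₁ : z₁ - 1 ≠ 0 := by intro h; nlinarith
  have hm₂ : z₂ - 1 ≠ 0 := by intro h; nlinarith
  have hm₃ : z₃ - 1 ≠ 0 := by intro h; nlinarith
  have hp₁ : z₁ + 1 ≠ 0 := by positivity
  have hp₂ : z₂ + 1 ≠ 0 := by positivity
  have hp₃ : z₃ + 1 ≠ 0 := by positivity
  have hs₁ : z₁ ^ 2 - 1 ≠ 0 := by intro h; nlinarith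
  have hs₂ : z₂ ^ 2 - 1 ≠ 0 := by intro h; nlinarith
  have hs₃ : z₃ ^ 2 - 1 ≠ 0 := by intro h; nlinarith
  have hq₁ : 1 - (z₁ ^ 2)⁻¹ ≠ 0 := by
    have : (1:ℝ) < z₁ ^ 2 := by nlinarith
    have h2 : (z₁ ^ 2)⁻¹ < 1 := by
      rw [inv_lt_one_iff₀]; right; exact this
    intro h; nlinarith
  have hq₂ : 1 - (z₂ ^ 2)⁻¹ ≠ 0 := by
    have : (1:ℝ) < z₂ ^ 2 := by nlinarith
    have h2 : (z₂ ^ 2)⁻¹ < 1 := by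
      rw [inv_lt_one_iff₀]; right; exact this
    intro h; nlinarith
  have hq₃ : 1 - (z₃ ^ 2)⁻¹ ≠ 0 := by
    have : (1:ℝ) < z₃ ^ 2 := by nlinarith
    have h2 : (z₃ ^ 2)⁻¹ < 1 := by
      rw [inv_lt_one_iff₀]; right; exact this
    intro h; nlinarith
  field_simp
  ring
end
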